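/- arXiv:2112.04166 — 15 statements merged into one kernel-verified Lean document; each statement's English description precedes it below -/
import Mathlib

section
/- For every instance and every x ∈ [0,1], there exists an allocation satisfying WEF(x, 1−x). -/
set_option maxHeartbeats 1000000


open Finset

/-- An allocation: a partition of the item set `Fin m` into `n` (possibly empty) bundles. -/
def IsAllocation {n m : ℕ} (A : Fin n → Finset (Fin m)) : Prop :=
  (∀ i j : Fin n, i ≠ j → Disjoint (A i) (A j)) ∧
    Finset.univ.biUnion A = (Finset.univ : Finset (Fin m))

/-- Additive utility of agent `i` for a bundle `S`. -/
def util {n m : ℕ} (u : Fin n → Fin m → ℝ) (i : Fin n) (S : Finset (Fin m)) : ℝ :=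
  ∑ g ∈ S, u i g

/-- Weighted envy-freeness up to (x, y)-fraction of one item. -/
def WEF {n m : ℕ} (w : Fin n → ℝ) (u : Fin n → Fin m → ℝ) (A : Fin n → Finset (Fin m))
    (x y : ℝ) : Prop :=
  ∀ i j : Fin n, ∃ B : Finset (Fin m), B ⊆ A j ∧ B.card ≤ 1 ∧
    (util u i (A i) + y * util u i B) / w i ≥ (util u i (A j) - x * util u i B) / w j

/-- Weighted proportionality up to (x, y)-fraction of one item. -/
def WPROP {n m : ℕ} (w : Fin n → ℝ) (u : Fin n → Fin m → ℝ) (A : Fin n → Finset (Fin m))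
    (x y : ℝ) : Prop :=
  ∀ i : Fin n, ∃ B : Finset (Fin m), B ⊆ Finset.univ \ A i ∧ B.card ≤ 1 ∧
    (util u i (A i) + y * util u i B) / w i ≥
      (util u i Finset.univ - (n : ℝ) * x * util u i B) / (∑ j, w j)

/-- The stronger notion WPROP*(x,y). -/
def WPROPstar {n m : ℕ} (w : Fin n → ℝ) (u : Fin n → Fin m → ℝ) (A : Fin n → Finset (Fin m))
    (x y : ℝ) : Prop :=
  ∀ i : Fin n, ∃ B : Finset (Fin m), B ⊆ Finset.univ \ A i ∧ B.card ≤ 1 ∧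
    ∃ Bf : Fin n → Finset (Fin m),
      (∀ j : Fin n, j ≠ i → Bf j ⊆ A j ∧ (Bf j).card ≤ 1) ∧
      (util u i (A i) + y * util u i B) / w i ≥
        (util u i Finset.univ - x * ∑ j ∈ Finset.univ.erase i, util u i (Bf j)) / (∑ j, w j)

/-- The (1-out-of-n) maximin share of agent `i`. -/
noncomputable def MMS {n m : ℕ} (u : Fin n → Fin m → ℝ) (i : Fin n) : ℝ :=
  sSup {v : ℝ | ∃ Z : Fin n → Finset (Fin m), IsAllocation Z ∧ v = ⨅ j, util u i (Z j)}

/-- The normalized maximin share of agent `i`. -/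
noncomputable def NMMS {n m : ℕ} (w : Fin n → ℝ) (u : Fin n → Fin m → ℝ) (i : Fin n) : ℝ :=
  (w i / ∑ j, w j) * (n : ℝ) * MMS u i

/-- The weighted maximin share of agent `i`. -/
noncomputable def WMMS {n m : ℕ} (w : Fin n → ℝ) (u : Fin n → Fin m → ℝ) (i : Fin n) : ℝ :=
  w i * sSup {v : ℝ | ∃ Z : Fin n → Finset (Fin m), IsAllocation Z ∧
    v = ⨅ j, util u i (Z j) / w j}

namespace WEFaux
variable {n m : ℕ}

noncomputable def pickAgent (hn : 0 < n) (w : Fin n → ℝ) (y : ℝ)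
    (A : Fin n → Finset (Fin m)) : Fin n :=
  (Finset.exists_min_image Finset.univ (fun i => (((A i).card : ℝ) + y) / w i)
    ⟨⟨0, hn⟩, Finset.mem_univ _⟩).choose

lemma pickAgent_spec (hn : 0 < n) (w : Fin n → ℝ) (y : ℝ) (A : Fin n → Finset (Fin m)) :
    ∀ j, (((A (pickAgent hn w y A)).card : ℝ) + y) / w (pickAgent hn w y A)
      ≤ (((A j).card : ℝ) + y) / w j := by
  intro j
  exact (Finset.exists_min_image Finset.univ (fun i => (((A i).card : ℝ) + y) / w i)
    ⟨⟨0, hn⟩, Finset.mem_univ _⟩).choose_spec.2 j (Finset.mem_univ j)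

noncomputable def pickItem (u : Fin n → Fin m → ℝ) (i : Fin n) (S : Finset (Fin m))
    (h : S.Nonempty) : Fin m :=
  (Finset.exists_max_image S (u i) h).choose

lemma pickItem_mem (u : Fin n → Fin m → ℝ) (i : Fin n) (S : Finset (Fin m)) (h : S.Nonempty) :
    pickItem u i S h ∈ S :=
  (Finset.exists_max_image S (u i) h).choose_spec.1

lemma pickItem_max (u : Fin n → Fin m → ℝ) (i : Fin n) (S : Finset (Fin m)) (h : S.Nonempty) :
    ∀ g ∈ S, u i g ≤ u i (pickItem u i S h) :=
  (Finset.exists_max_image S (u i) h).choose_spec.2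

noncomputable def step (hn : 0 < n) (w : Fin n → ℝ) (u : Fin n → Fin m → ℝ) (y : ℝ)
    (st : (Fin n → Finset (Fin m)) × Finset (Fin m)) :
    (Fin n → Finset (Fin m)) × Finset (Fin m) :=
  if h : st.2.Nonempty then
    let p := pickAgent hn w y st.1
    let g := pickItem u p st.2 h
    (Function.update st.1 p (insert g (st.1 p)), st.2.erase g)
  else st

noncomputable def state (hn : 0 < n) (w : Fin n → ℝ) (u : Fin n → Fin m → ℝ) (y : ℝ) :
    ℕ → (Fin n → Finset (Fin m)) × Finset (Fin m)
  | 0 => (fun _ => (∅ : Finset (Fin m)), Finset.univ)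
  | k + 1 => step hn w u y (state hn w u y k)

lemma step_spec (hn : 0 < n) (w : Fin n → ℝ) (u : Fin n → Fin m → ℝ) (y : ℝ)
    (st : (Fin n → Finset (Fin m)) × Finset (Fin m)) (h : st.2.Nonempty) :
    ∃ p g, g ∈ st.2 ∧
      (∀ q, (((st.1 p).card : ℝ) + y) / w p ≤ (((st.1 q).card : ℝ) + y) / w q) ∧
      (∀ g' ∈ st.2, u p g' ≤ u p g) ∧
      step hn w u y st = (Function.update st.1 p (insert g (st.1 p)), st.2.erase g) := by
  refine ⟨pickAgent hn w y st.1, pickItem u (pickAgent hn w y st.1) st.2 h,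
    pickItem_mem _ _ _ _, pickAgent_spec hn w y st.1,
    pickItem_max _ _ _ _, ?_⟩
  simp only [step, dif_pos h]

noncomputable def tau (wi wj y : ℝ) (s : ℕ) : ℝ := (wi - wj) * y + wi * ((s : ℝ) - 1)
noncomputable def TT (wi wj y : ℝ) (s : ℕ) : ℝ := if s = 0 then 0 else max 0 (tau wi wj y s)
noncomputable def GG (wi wj y : ℝ) (s : ℕ) : ℝ := if s = 0 then 0 else max 0 (-(tau wi wj y s))

lemma max0_neg (a : ℝ) : max 0 (-a) = max 0 a - a := by
  rcases le_total a 0 with h | h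
  · rw [max_eq_right (neg_nonneg.mpr h), max_eq_left h]; ring
  · rw [max_eq_left (neg_nonpos.mpr h), max_eq_right h]; ring

def PairInv (w : Fin n → ℝ) (u : Fin n → Fin m → ℝ) (y : ℝ)
    (A : Fin n → Finset (Fin m)) (i j : Fin n) : Prop :=
  ∃ B : Finset (Fin m), ∃ φ : Fin m → ℝ,
    B ⊆ A j ∧ B.card ≤ 1 ∧ (∀ g ∈ A j, u i g ≤ util u i B) ∧
    (∀ g, 0 ≤ φ g) ∧ (∀ g, φ g ≤ w j) ∧ (∀ g, g ∉ A i → φ g = 0) ∧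
    (∑ g, φ g) ≤ TT (w i) (w j) y (A j).card ∧
    w i * util u i (A j \ B) + (w i - w j) * y * util u i B
      + GG (w i) (w j) y (A j).card * util u i B ≤ ∑ g, φ g * u i g

def Inv (w : Fin n → ℝ) (u : Fin n → Fin m → ℝ) (y : ℝ)
    (st : (Fin n → Finset (Fin m)) × Finset (Fin m)) : Prop :=
  (∀ i j, i ≠ j → Disjoint (st.1 i) (st.1 j)) ∧
  (∀ i, Disjoint (st.1 i) st.2) ∧
  (∀ x : Fin m, x ∈ Finset.univ.biUnion st.1 ↔ x ∉ st.2) ∧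
  (∀ i, ∀ h ∈ st.1 i, ∀ g ∈ st.2, u i g ≤ u i h) ∧
  (∀ i j, i ≠ j → PairInv w u y st.1 i j)

lemma extend_phi (T : Finset (Fin m)) (c : ℝ) (φ v : Fin m → ℝ)
    (h0 : ∀ g, 0 ≤ φ g) (h1 : ∀ g, φ g ≤ c) (hsupp : ∀ g, g ∉ T → φ g = 0)
    (δ : ℝ) (hδ : 0 ≤ δ) (hcap : ∑ g, φ g + δ ≤ c * T.card)
    (val : ℝ) (hval : ∀ g ∈ T, val ≤ v g) :
    ∃ φ' : Fin m → ℝ, (∀ g, 0 ≤ φ' g) ∧ (∀ g, φ' g ≤ c) ∧ (∀ g, g ∉ T → φ' g = 0) ∧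
      (∑ g, φ' g = ∑ g, φ g + δ) ∧ (∑ g, φ g * v g + δ * val ≤ ∑ g, φ' g * v g) := by
  have hsub : ∑ g ∈ T, φ g = ∑ g, φ g := by
    exact Finset.sum_subset (Finset.subset_univ T) (fun g _ hg => hsupp g hg)
  set R : ℝ := c * T.card - ∑ g, φ g with hR
  have hδR : δ ≤ R := by rw [hR]; linarith
  have hR0 : 0 ≤ R := le_trans hδ hδR
  rcases eq_or_lt_of_le hR0 with hReq | hRpos
  · have hδ0 : δ = 0 := le_antisymm (by linarith) hδ
    exact ⟨φ, h0, h1, hsupp, by rw [hδ0, add_zero], by rw [hδ0]; simp⟩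
  · set lam : ℝ := δ / R with hlam
    have hlam0 : 0 ≤ lam := div_nonneg hδ hR0
    have hlam1 : lam ≤ 1 := by rw [hlam, div_le_one hRpos]; exact hδR
    have hlamR : lam * R = δ := by rw [hlam]; field_simp
    have hsumT : ∑ g ∈ T, (c - φ g) = R := by
      rw [Finset.sum_sub_distrib, Finset.sum_const, hsub, hR, nsmul_eq_mul, mul_comm]
    refine ⟨fun g => φ g + (if g ∈ T then lam * (c - φ g) else 0), ?_, ?_, ?_, ?_, ?_⟩
    · intro g; by_cases hg : g ∈ T
      · simp only [hg, if_true]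
        have := h1 g
        nlinarith [h0 g]
      · simp [hg, h0 g]
    · intro g; by_cases hg : g ∈ T
      · simp only [hg, if_true]
        nlinarith [h1 g, h0 g]
      · simp [hg, h1 g]
    · intro g hg; simp [hg, hsupp g hg]
    · rw [Finset.sum_add_distrib,
        Finset.sum_ite_mem Finset.univ T (fun g => lam * (c - φ g)), Finset.univ_inter,
        ← Finset.mul_sum, hsumT, hlamR]
    · have key : ∑ g, (if g ∈ T then lam * (c - φ g) else 0) * v g
          = lam * ∑ g ∈ T, (c - φ g) * v g := by
        rw [Finset.mul_sum]
        have h2 : (∑ g, (if g ∈ T then lam * (c - φ g) else 0) * v g)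
            = ∑ g, (if g ∈ T then lam * ((c - φ g) * v g) else 0) := by
          apply Finset.sum_congr rfl
          intro g _; by_cases hg : g ∈ T <;> simp [hg] <;> ring
        rw [h2, Finset.sum_ite_mem, Finset.univ_inter]
      have hge : lam * ∑ g ∈ T, (c - φ g) * v g ≥ lam * ∑ g ∈ T, (c - φ g) * val := by
        apply mul_le_mul_of_nonneg_left _ hlam0
        apply Finset.sum_le_sum
        intro g hg
        exact mul_le_mul_of_nonneg_left (hval g hg) (by linarith [h1 g])
      have : ∑ g ∈ T, (c - φ g) * val = R * val := by
        rw [← Finset.sum_mul, hsumT]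
      simp only [add_mul, Finset.sum_add_distrib, key]
      rw [this] at hge
      have : lam * (R * val) = δ * val := by rw [← mul_assoc, hlamR]
      linarith [hge]

lemma pair_step_pick (w : Fin n → ℝ) (u : Fin n → Fin m → ℝ) (y : ℝ)
    (hw : ∀ i, 0 < w i) (hu : ∀ i g, 0 ≤ u i g) (hy0 : 0 ≤ y) (hy1 : y ≤ 1)
    (i j : Fin n) (hij : i ≠ j) (A : Fin n → Finset (Fin m)) (g : Fin m)
    (hgAj : g ∉ A j)
    (hPMi : ∀ h ∈ A i, u i g ≤ u i h)
    (hrule : (((A j).card : ℝ) + y) / w j ≤ (((A i).card : ℝ) + y) / w i)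
    (hp : PairInv w u y A i j) :
    PairInv w u y (Function.update A j (insert g (A j))) i j := by
  obtain ⟨B, φ, hBsub, hBcard, hBmax, hφ0, hφw, hφsupp, hφsum, hmain⟩ := hp
  have hwi := hw i
  have hwj := hw j
  obtain ⟨s, hs⟩ : ∃ s, (A j).card = s := ⟨_, rfl⟩
  obtain ⟨t, ht⟩ : ∃ t, (A i).card = t := ⟨_, rfl⟩
  rw [hs] at hφsum hmain hrule
  rw [ht] at hrule
  have hAj' : Function.update A j (insert g (A j)) j = insert g (A j) :=
    Function.update_self j _ A
  have hAi' : Function.update A j (insert g (A j)) i = A i :=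
    Function.update_of_ne hij _ A
  have hcard' : (insert g (A j)).card = s + 1 := by
    rw [Finset.card_insert_of_notMem hgAj, hs]
  have hG0 : 0 ≤ u i g := hu i g
  have hBv0 : 0 ≤ util u i B := Finset.sum_nonneg fun g' _ => hu i g'
  have hUg : util u i ({g} : Finset (Fin m)) = u i g := by simp [util]
  -- cross-multiplied rule
  have hcap0 : w i * ((s : ℝ) + y) ≤ w j * ((t : ℝ) + y) := by
    rw [div_le_div_iff₀ hwj hwi] at hrule
    linarith [hrule]
  have htau1 : tau (w i) (w j) y (s + 1) = tau (w i) (w j) y s + w i := by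
    unfold tau; push_cast; ring
  have hTT1 : TT (w i) (w j) y (s + 1) = max 0 (tau (w i) (w j) y s + w i) := by
    rw [TT, if_neg (Nat.succ_ne_zero s), htau1]
  have hGG1 : GG (w i) (w j) y (s + 1) = max 0 (-(tau (w i) (w j) y s + w i)) := by
    rw [GG, if_neg (Nat.succ_ne_zero s), htau1]
  have htauval : tau (w i) (w j) y s + w i = (w i - w j) * y + w i * (s : ℝ) := by
    unfold tau; ring
  have hτcap : tau (w i) (w j) y s + w i ≤ w j * (t : ℝ) := by
    rw [htauval]; nlinarith
  have hcap : TT (w i) (w j) y (s + 1) ≤ w j * (t : ℝ) := by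
    rw [hTT1]; exact max_le (by positivity) hτcap
  set δ : ℝ := TT (w i) (w j) y (s + 1) - TT (w i) (w j) y s with hδdef
  have hTT0 : 0 ≤ TT (w i) (w j) y s := by
    rw [TT]; split
    · exact le_refl 0
    · exact le_max_left _ _
  have hTTmax : ∀ s', s' ≠ 0 → TT (w i) (w j) y s' = max 0 (tau (w i) (w j) y s') :=
    fun s' h => by rw [TT, if_neg h]
  have hδ0 : 0 ≤ δ := by
    rw [hδdef, hTT1]
    rcases Nat.eq_zero_or_pos s with h0 | hpos
    · rw [h0]; simp [TT]
    · rw [hTTmax s (Nat.pos_iff_ne_zero.mp hpos)]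
      have h1 : tau (w i) (w j) y s ≤ tau (w i) (w j) y s + w i := by linarith
      have := max_le_max (le_refl (0:ℝ)) h1
      linarith
  have hδwi : δ ≤ w i := by
    rw [hδdef, hTT1]
    have h2 : max 0 (tau (w i) (w j) y s + w i) ≤ max 0 (tau (w i) (w j) y s) + w i := by
      apply max_le
      · have := le_max_left (0:ℝ) (tau (w i) (w j) y s); linarith
      · have := le_max_right (0:ℝ) (tau (w i) (w j) y s); linarith
    rcases Nat.eq_zero_or_pos s with h0 | hpos
    · rw [h0]
      have hTT0' : TT (w i) (w j) y 0 = 0 := by simp [TT]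
      rw [hTT0', sub_zero]
      apply max_le (le_of_lt hwi)
      have : tau (w i) (w j) y 0 ≤ 0 := by unfold tau; push_cast; nlinarith
      linarith
    · rw [hTTmax s (Nat.pos_iff_ne_zero.mp hpos)]
      linarith
  -- extend φ by mass δ placed on A i
  obtain ⟨φ', hφ'0, hφ'w, hφ'supp, hφ'sum, hφ'val⟩ :=
    extend_phi (A i) (w j) φ (u i) hφ0 hφw hφsupp δ hδ0
      (by rw [ht]; have := hcap; linarith) (u i g) hPMi
  simp only [PairInv, hAj', hAi', hcard', hs]
  rcases Nat.eq_zero_or_pos s with hs0 | hspos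
  · -- s = 0 : A j = ∅, take B' = {g}
    subst hs0
    have hAjE : A j = ∅ := Finset.card_eq_zero.mp hs
    have hsum0 : ∑ g', φ g' = 0 := by
      have h1 : ∑ g', φ g' ≤ 0 := by simpa [TT] using hφsum
      exact le_antisymm h1 (Finset.sum_nonneg fun g' _ => hφ0 g')
    have hφallz : ∀ g', φ g' = 0 :=
      fun g' => (Finset.sum_eq_zero_iff_of_nonneg (fun g' _ => hφ0 g')).mp hsum0 g'
        (Finset.mem_univ g')
    have hφv0 : ∑ g', φ g' * u i g' = 0 :=
      Finset.sum_eq_zero fun g' _ => by rw [hφallz g', zero_mul]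
    refine ⟨{g}, φ', Finset.singleton_subset_iff.mpr (Finset.mem_insert_self g _),
      by simp, ?_, hφ'0, hφ'w, hφ'supp, ?_, ?_⟩
    · intro g' hg'
      rcases Finset.mem_insert.mp hg' with h | h
      · rw [h, hUg]
      · rw [hAjE] at h; exact absurd h (Finset.notMem_empty g')
    · rw [hφ'sum, hsum0]
      linarith
    · have hsd : insert g (A j) \ ({g} : Finset (Fin m)) = ∅ := by
        rw [hAjE]; simp
      rw [hsd, hUg]
      have hUempty : util u i (∅ : Finset (Fin m)) = 0 := by simp [util]
      rw [hUempty]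
      have hδval : δ = TT (w i) (w j) y 1 := by rw [hδdef]; simp [TT]
      rw [hφv0, hδval] at hφ'val
      simp only [zero_add] at hφ'val
      have h1 : TT (w i) (w j) y (0 + 1) = max 0 (tau (w i) (w j) y 0 + w i) := hTT1
      have h2 : GG (w i) (w j) y (0 + 1) = max 0 (-(tau (w i) (w j) y 0 + w i)) := hGG1
      simp only [zero_add] at h1 h2
      rw [h2]
      rw [h1] at hφ'val
      have := max0_neg (tau (w i) (w j) y 0 + w i)
      rw [this]
      have h0' : tau (w i) (w j) y 0 + w i = (w i - w j) * y := by
        unfold tau; push_cast; ring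
      nlinarith [hφ'val, hG0, le_max_left (0:ℝ) (tau (w i) (w j) y 0 + w i)]
  · -- s ≥ 1
    have hsne : s ≠ 0 := Nat.pos_iff_ne_zero.mp hspos
    have hTTs : TT (w i) (w j) y s = max 0 (tau (w i) (w j) y s) := hTTmax s hsne
    have hGGs : GG (w i) (w j) y s = max 0 (-(tau (w i) (w j) y s)) := by
      rw [GG, if_neg hsne]
    -- key identity : GG(s+1) = GG(s) + δ - w i
    have hGGsucc : GG (w i) (w j) y (s + 1) = GG (w i) (w j) y s + δ - w i := by
      rw [hGG1, hGGs, max0_neg, max0_neg, hδdef, hTT1, hTTs]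
      ring
    by_cases hB : u i g ≤ util u i B
    · -- keep B
      have hgB : g ∉ B := fun h => hgAj (hBsub h)
      have hsd : insert g (A j) \ B = insert g (A j \ B) :=
        Finset.insert_sdiff_of_notMem _ hgB
      have hgAjB : g ∉ A j \ B := fun h => hgAj (Finset.mem_sdiff.mp h).1
      have hUsd : util u i (insert g (A j) \ B) = u i g + util u i (A j \ B) := by
        rw [hsd, util, Finset.sum_insert hgAjB]; rfl
      refine ⟨B, φ', hBsub.trans (Finset.subset_insert _ _), hBcard, ?_,
        hφ'0, hφ'w, hφ'supp, ?_, ?_⟩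
      · intro g' hg'
        rcases Finset.mem_insert.mp hg' with h | h
        · rw [h]; exact hB
        · exact hBmax g' h
      · rw [hφ'sum]; linarith
      · rw [hUsd]
        have hkey : w i * u i g + (GG (w i) (w j) y (s+1) - GG (w i) (w j) y s) * util u i B
            ≤ δ * u i g := by
          have h1 : GG (w i) (w j) y (s+1) - GG (w i) (w j) y s = δ - w i := by
            rw [hGGsucc]; ring
          rw [h1]
          nlinarith [mul_nonneg (by linarith : (0:ℝ) ≤ w i - δ)
            (by linarith : (0:ℝ) ≤ util u i B - u i g)]
        nlinarith [hmain, hφ'val, hkey]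
    · -- switch B to {g}
      push_neg at hB
      have hsd : insert g (A j) \ ({g} : Finset (Fin m)) = A j := by
        rw [Finset.sdiff_singleton_eq_erase, Finset.erase_insert hgAj]
      have hUAj : util u i (A j \ B) + util u i B = util u i (A j) := by
        rw [util, util, util]; exact Finset.sum_sdiff hBsub
      have hc : 0 ≤ w i - (w i - w j) * y - GG (w i) (w j) y s := by
        rw [hGGs]
        rcases le_total (-(tau (w i) (w j) y s)) 0 with h | h
        · rw [max_eq_left h]; nlinarith
        · rw [max_eq_right h]
          have hscast : (1:ℝ) ≤ (s:ℝ) := by exact_mod_cast hspos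
          unfold tau; nlinarith
      refine ⟨{g}, φ', Finset.singleton_subset_iff.mpr (Finset.mem_insert_self g _),
        by simp, ?_, hφ'0, hφ'w, hφ'supp, ?_, ?_⟩
      · intro g' hg'
        rcases Finset.mem_insert.mp hg' with h | h
        · rw [h, hUg]
        · rw [hUg]; exact le_of_lt (lt_of_le_of_lt (hBmax g' h) hB)
      · rw [hφ'sum]; linarith
      · rw [hsd, hUg]
        have hprod := mul_nonneg hc (by linarith : (0:ℝ) ≤ u i g - util u i B)
        nlinarith [hmain, hφ'val, hGGsucc, hUAj, hprod]

lemma inv_step (hn : 0 < n) (w : Fin n → ℝ) (u : Fin n → Fin m → ℝ) (y : ℝ)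
    (hw : ∀ i, 0 < w i) (hu : ∀ i g, 0 ≤ u i g) (hy0 : 0 ≤ y) (hy1 : y ≤ 1)
    (st : (Fin n → Finset (Fin m)) × Finset (Fin m)) (h : Inv w u y st) :
    Inv w u y (step hn w u y st) := by
  by_cases hS : st.2.Nonempty
  · obtain ⟨p, g, hgS, hrule, hmax, hstep⟩ := step_spec hn w u y st hS
    obtain ⟨hdisj, hdisjS, hcover, hPM, hpair⟩ := h
    rw [hstep, Inv]
    dsimp only
    have hgA : ∀ q, g ∉ st.1 q := fun q => Finset.disjoint_right.mp (hdisjS q) hgS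
    refine ⟨?_, ?_, ?_, ?_, ?_⟩
    · -- pairwise disjoint
      intro i j hij
      rcases eq_or_ne i p with rfl | hi
      · rw [Function.update_self, Function.update_of_ne (Ne.symm hij)]
        exact Finset.disjoint_insert_left.mpr ⟨hgA j, hdisj i j hij⟩
      · rcases eq_or_ne j p with rfl | hj
        · rw [Function.update_self, Function.update_of_ne hi]
          exact Finset.disjoint_insert_right.mpr ⟨hgA i, hdisj i j hij⟩
        · rw [Function.update_of_ne hi, Function.update_of_ne hj]
          exact hdisj i j hij
    · -- disjoint from remaining
      intro q
      rcases eq_or_ne q p with rfl | hq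
      · rw [Function.update_self]
        exact Finset.disjoint_insert_left.mpr
          ⟨Finset.notMem_erase g _, (hdisjS q).mono_right (Finset.erase_subset _ _)⟩
      · rw [Function.update_of_ne hq]
        exact (hdisjS q).mono_right (Finset.erase_subset _ _)
    · -- coverage
      intro x
      constructor
      · intro hx
        obtain ⟨q, -, hq⟩ := Finset.mem_biUnion.mp hx
        rcases eq_or_ne q p with rfl | hqp
        · rw [Function.update_self] at hq
          rcases Finset.mem_insert.mp hq with rfl | hq'
          · exact Finset.notMem_erase x _
          · have hxS := (hcover x).mp (Finset.mem_biUnion.mpr ⟨q, Finset.mem_univ q, hq'⟩)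
            exact fun hxe => hxS (Finset.erase_subset _ _ hxe)
        · rw [Function.update_of_ne hqp] at hq
          have hxS := (hcover x).mp (Finset.mem_biUnion.mpr ⟨q, Finset.mem_univ q, hq⟩)
          exact fun hxe => hxS (Finset.erase_subset _ _ hxe)
      · intro hx
        rcases eq_or_ne x g with rfl | hxg
        · exact Finset.mem_biUnion.mpr ⟨p, Finset.mem_univ p,
            by rw [Function.update_self]; exact Finset.mem_insert_self _ _⟩
        · have hxS : x ∉ st.2 := fun hmem => hx (Finset.mem_erase.mpr ⟨hxg, hmem⟩)
          obtain ⟨q, -, hq⟩ := Finset.mem_biUnion.mp ((hcover x).mpr hxS)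
          refine Finset.mem_biUnion.mpr ⟨q, Finset.mem_univ q, ?_⟩
          rcases eq_or_ne q p with rfl | hqp
          · rw [Function.update_self]; exact Finset.mem_insert_of_mem hq
          · rw [Function.update_of_ne hqp]; exact hq
    · -- pick monotonicity
      intro q hh hmem g' hg'
      have hg'S : g' ∈ st.2 := Finset.erase_subset _ _ hg'
      rcases eq_or_ne q p with rfl | hqp
      · rw [Function.update_self] at hmem
        rcases Finset.mem_insert.mp hmem with rfl | hmem'
        · exact hmax g' hg'S
        · exact hPM q hh hmem' g' hg'S
      · rw [Function.update_of_ne hqp] at hmem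
        exact hPM q hh hmem g' hg'S
    · -- pair invariants
      intro i j hij
      rcases eq_or_ne j p with rfl | hjp
      · exact pair_step_pick w u y hw hu hy0 hy1 i j hij st.1 g (hgA j)
          (fun h hh => hPM i h hh g hgS) (hrule i) (hpair i j hij)
      · obtain ⟨B, φ, c1, c2, c3, c4, c5, c6, c7, c8⟩ := hpair i j hij
        have hAj : Function.update st.1 p (insert g (st.1 p)) j = st.1 j :=
          Function.update_of_ne hjp _ _
        have hAisup : st.1 i ⊆ Function.update st.1 p (insert g (st.1 p)) i := by
          rcases eq_or_ne i p with rfl | hip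
          · rw [Function.update_self]; exact Finset.subset_insert _ _
          · rw [Function.update_of_ne hip]
        exact ⟨B, φ, by rw [hAj]; exact c1, c2, by rw [hAj]; exact c3, c4, c5,
          fun g' hg' => c6 g' (fun hmem => hg' (hAisup hmem)),
          by rw [hAj]; exact c7, by rw [hAj]; exact c8⟩
  · rw [step, dif_neg hS]; exact h

lemma inv_state (hn : 0 < n) (w : Fin n → ℝ) (u : Fin n → Fin m → ℝ) (y : ℝ)
    (hw : ∀ i, 0 < w i) (hu : ∀ i g, 0 ≤ u i g) (hy0 : 0 ≤ y) (hy1 : y ≤ 1) (k : ℕ) :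
    Inv w u y (state hn w u y k) := by
  induction k with
  | zero =>
    refine ⟨?_, ?_, ?_, ?_, ?_⟩
    · intro i j _; simp [state]
    · intro i; simp [state]
    · intro x; simp [state]
    · intro i h hh; simp [state] at hh
    · intro i j _
      refine ⟨∅, fun _ => 0, ?_, ?_, ?_, ?_, ?_, ?_, ?_, ?_⟩
      · simp [state]
      · simp
      · intro g hg; simp [state] at hg
      · intro g; exact le_refl 0
      · intro g; exact le_of_lt (hw j)
      · intro g _; rfl
      · simp [state, TT]
      · simp [state, util]
  | succ k ih => exact inv_step hn w u y hw hu hy0 hy1 _ ih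

lemma state_card (hn : 0 < n) (w : Fin n → ℝ) (u : Fin n → Fin m → ℝ) (y : ℝ) (k : ℕ) :
    (state hn w u y k).2.card ≤ m - k := by
  induction k with
  | zero => simp [state]
  | succ k ih =>
    show (step hn w u y (state hn w u y k)).2.card ≤ m - (k+1)
    by_cases hS : (state hn w u y k).2.Nonempty
    · obtain ⟨p, g, hgS, -, -, hstep⟩ := step_spec hn w u y (state hn w u y k) hS
      rw [hstep]
      have := Finset.card_erase_of_mem hgS
      simp only [this]
      omega
    · rw [step, dif_neg hS]
      rw [Finset.not_nonempty_iff_eq_empty] at hS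
      simp [hS]


end WEFaux

/-- For every instance and every x ∈ [0,1], there exists an allocation satisfying WEF(x, 1−x). -/
theorem wef_x_one_sub_x_exists (n m : ℕ) (hn : 2 ≤ n)
    (w : Fin n → ℝ) (hw : ∀ i, 0 < w i)
    (u : Fin n → Fin m → ℝ) (hu : ∀ i g, 0 ≤ u i g)
    (x : ℝ) (hx : x ∈ Set.Icc (0 : ℝ) 1) :
    ∃ A : Fin n → Finset (Fin m), IsAllocation A ∧ WEF w u A x (1 - x) := by
  have hn0 : 0 < n := by omega
  obtain ⟨hx0, hx1⟩ := hx
  have hy0 : (0:ℝ) ≤ 1 - x := by linarith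
  have hy1 : (1:ℝ) - x ≤ 1 := by linarith
  obtain ⟨hdisj, hdisjS, hcover, hPM, hpair⟩ :=
    WEFaux.inv_state hn0 w u (1 - x) hw hu hy0 hy1 m
  have hSempty : (WEFaux.state hn0 w u (1 - x) m).2 = ∅ := by
    have hcard := WEFaux.state_card hn0 w u (1 - x) m
    rw [Nat.sub_self] at hcard
    exact Finset.card_eq_zero.mp (Nat.le_zero.mp hcard)
  set A := (WEFaux.state hn0 w u (1 - x) m).1 with hA
  refine ⟨A, ⟨hdisj, ?_⟩, ?_⟩
  · ext g
    simp only [Finset.mem_univ, iff_true]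
    exact (hcover g).mpr (by rw [hSempty]; exact Finset.notMem_empty g)
  · intro i j
    rcases eq_or_ne i j with rfl | hne
    · refine ⟨∅, Finset.empty_subset _, by simp, ?_⟩
      have h0 : util u i (∅ : Finset (Fin m)) = 0 := by simp [util]
      rw [h0, mul_zero, mul_zero, add_zero, sub_zero]
    · obtain ⟨B, φ, c1, c2, c3, c4, c5, c6, c7, c8⟩ := hpair i j hne
      refine ⟨B, c1, c2, ?_⟩
      have hφle : ∑ g, φ g * u i g ≤ w j * util u i (A i) := by
        have hpt : ∀ g, φ g * u i g ≤ (if g ∈ A i then w j * u i g else 0) := by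
          intro g
          by_cases hgi : g ∈ A i
          · simp only [hgi, if_true]
            exact mul_le_mul_of_nonneg_right (c5 g) (hu i g)
          · simp only [hgi, if_false, c6 g hgi, zero_mul, le_refl]
        calc ∑ g, φ g * u i g ≤ ∑ g, (if g ∈ A i then w j * u i g else 0) :=
              Finset.sum_le_sum (fun g _ => hpt g)
          _ = ∑ g ∈ A i, w j * u i g := by
              rw [Finset.sum_ite_mem, Finset.univ_inter]
          _ = w j * util u i (A i) := by rw [util, Finset.mul_sum]
      have hGG0 : 0 ≤ WEFaux.GG (w i) (w j) (1 - x) (A j).card := by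
        rw [WEFaux.GG]; split
        · exact le_refl 0
        · exact le_max_left _ _
      have hBv0 : 0 ≤ util u i B := Finset.sum_nonneg fun g' _ => hu i g'
      have hUAj : util u i (A j) = util u i (A j \ B) + util u i B := by
        rw [util, util, util]; exact (Finset.sum_sdiff c1).symm
      have main : w i * util u i (A j \ B) + (w i - w j) * (1 - x) * util u i B
          ≤ w j * util u i (A i) := by
        nlinarith [c8, hφle, mul_nonneg hGG0 hBv0]
      rw [ge_iff_le, div_le_div_iff₀ (hw j) (hw i), hUAj]
      nlinarith [main]
end

section
/- For all x, y ∈ [0,1] and every y' ∈ [0,1] with y' ≥ (1 − (min_{i ∈ N} w_i)/w_N)·y, every allocation satisfying WEF(x,y) also satisfies WPROP*(x,y'). -/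
open Finset

/-- WEF(x,y) implies WPROP*(x,y') whenever y' ≥ (1 − (min_i w_i)/w_N)·y. -/
theorem wef_implies_wpropstar (n m : ℕ) (hn : 2 ≤ n)
    (w : Fin n → ℝ) (hw : ∀ i, 0 < w i)
    (u : Fin n → Fin m → ℝ) (hu : ∀ i g, 0 ≤ u i g)
    (x y y' : ℝ) (hx : x ∈ Set.Icc (0 : ℝ) 1) (hy : y ∈ Set.Icc (0 : ℝ) 1)
    (hy' : y' ∈ Set.Icc (0 : ℝ) 1)
    (hyy' : y' ≥ (1 - (⨅ i, w i) / ∑ i, w i) * y)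
    (A : Fin n → Finset (Fin m)) (hA : IsAllocation A)
    (hWEF : WEF w u A x y) :
    WPROPstar w u A x y' := by
  obtain ⟨hAdisj, hAcover⟩ := hA
  intro i
  have hWpos : (0 : ℝ) < ∑ j, w j :=
    Finset.sum_pos (fun j _ => hw j) ⟨i, Finset.mem_univ i⟩
  have hUnn : ∀ S : Finset (Fin m), 0 ≤ util u i S :=
    fun S => Finset.sum_nonneg fun g _ => hu i g
  choose Bf hBsub hBcard hBineq using hWEF i
  have hne : (Finset.univ.erase i).Nonempty := by
    rw [← Finset.card_pos, Finset.card_erase_of_mem (Finset.mem_univ i),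
      Finset.card_univ, Fintype.card_fin]
    omega
  obtain ⟨j0, hj0mem, hj0max⟩ :=
    Finset.exists_max_image (Finset.univ.erase i) (fun j => util u i (Bf j)) hne
  have hj0ne : j0 ≠ i := Finset.ne_of_mem_erase hj0mem
  refine ⟨Bf j0, ?_, hBcard j0, Bf, fun j _ => ⟨hBsub j, hBcard j⟩, ?_⟩
  · intro g hg
    simp only [Finset.mem_sdiff, Finset.mem_univ, true_and]
    exact fun hgi => Finset.disjoint_left.mp (hAdisj j0 i hj0ne) (hBsub j0 hg) hgi
  · set W := ∑ j, w j with hWdef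
    set a := util u i (A i) with ha
    set b := util u i (Bf j0) with hb
    set T := ∑ j ∈ Finset.univ.erase i, util u i (Bf j) with hT
    set S := ∑ j ∈ Finset.univ.erase i, util u i (A j) with hS
    have hUuniv : util u i Finset.univ = a + S := by
      rw [← hAcover]
      have : util u i (Finset.univ.biUnion A) = ∑ j, util u i (A j) := by
        unfold util
        exact Finset.sum_biUnion (fun p _ q _ hpq => hAdisj p q hpq)
      rw [this, ← Finset.sum_erase_add Finset.univ _ (Finset.mem_univ i), hS, ha]
      ring
    -- per-agent inequality from WEF
    have hperj : ∀ j ∈ Finset.univ.erase i,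
        (util u i (A j) - x * util u i (Bf j)) * w i ≤ (a + y * b) * w j := by
      intro j hj
      have h1 := hBineq j
      rw [ge_iff_le, div_le_div_iff₀ (hw j) (hw i)] at h1
      have h2 : (a + y * util u i (Bf j)) * w j ≤ (a + y * b) * w j := by
        have : y * util u i (Bf j) ≤ y * b :=
          mul_le_mul_of_nonneg_left (hj0max j hj) hy.1
        nlinarith [(hw j).le]
      exact h1.trans h2
    have hsum : (S - x * T) * w i ≤ (a + y * b) * (W - w i) := by
      have hL : (S - x * T) * w i
          = ∑ j ∈ Finset.univ.erase i, (util u i (A j) - x * util u i (Bf j)) * w i := by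
        simp only [hS, hT, Finset.sum_mul, Finset.mul_sum, sub_mul, ← Finset.sum_sub_distrib]
      have hR : ∑ j ∈ Finset.univ.erase i, (a + y * b) * w j = (a + y * b) * (W - w i) := by
        rw [← Finset.mul_sum, Finset.sum_erase_eq_sub (Finset.mem_univ i)]
      rw [hL, ← hR]
      exact Finset.sum_le_sum hperj
    have hmin : (⨅ k, w k) ≤ w i := ciInf_le (Set.finite_range w).bddBelow i
    have hkey : y * (W - w i) ≤ y' * W := by
      have h1 : (1 - w i / W) * y ≤ (1 - (⨅ k, w k) / W) * y := by
        apply mul_le_mul_of_nonneg_right _ hy.1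
        have : (⨅ k, w k) / W ≤ w i / W := by gcongr
        linarith
      have h2 : (1 - w i / W) * y * W ≤ y' * W :=
        mul_le_mul_of_nonneg_right (h1.trans hyy') hWpos.le
      calc y * (W - w i) = (1 - w i / W) * y * W := by field_simp
        _ ≤ y' * W := h2
    have hkeyb : y * (W - w i) * b ≤ y' * W * b :=
      mul_le_mul_of_nonneg_right hkey (hUnn (Bf j0))
    rw [ge_iff_le, div_le_div_iff₀ hWpos (hw i), hUuniv]
    nlinarith [hsum, hkeyb, (hw i).le]
end

section
/- For all x, y ∈ [0,1] and every x' ∈ [0,1] with x' ≥ (1 − 1/n)·x, every allocation satisfying WPROP*(x,y) also satisfies WPROP(x',y). -/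
open Finset

/-- WPROP*(x,y) implies WPROP(x',y) whenever x' ≥ (1 − 1/n)·x. -/
theorem wpropstar_implies_wprop (n m : ℕ) (hn : 2 ≤ n)
    (w : Fin n → ℝ) (hw : ∀ i, 0 < w i)
    (u : Fin n → Fin m → ℝ) (hu : ∀ i g, 0 ≤ u i g)
    (x y x' : ℝ) (hx : x ∈ Set.Icc (0 : ℝ) 1) (hy : y ∈ Set.Icc (0 : ℝ) 1)
    (hx' : x' ∈ Set.Icc (0 : ℝ) 1)
    (hxx' : x' ≥ (1 - 1 / (n : ℝ)) * x)
    (A : Fin n → Finset (Fin m)) (hA : IsAllocation A)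
    (hstar : WPROPstar w u A x y) :
    WPROP w u A x' y := by
  intro i
  obtain ⟨B, hB, hBcard, Bf, hBf, hineq⟩ := hstar i
  have hn0 : (0 : ℝ) < (n : ℝ) := by positivity
  have hun : ∀ S : Finset (Fin m), 0 ≤ util u i S :=
    fun S => Finset.sum_nonneg fun g _ => hu i g
  obtain ⟨C, hC, hCmax⟩ := Finset.exists_max_image
    (insert B ((Finset.univ.erase i).image Bf)) (util u i)
    ⟨B, Finset.mem_insert_self _ _⟩
  have hCB : util u i B ≤ util u i C := hCmax B (Finset.mem_insert_self _ _)
  have hCprop : C ⊆ Finset.univ \ A i ∧ C.card ≤ 1 := by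
    rcases Finset.mem_insert.mp hC with h | h
    · exact h ▸ ⟨hB, hBcard⟩
    · obtain ⟨j, hj, hjC⟩ := Finset.mem_image.mp h
      have hji : j ≠ i := (Finset.mem_erase.mp hj).1
      obtain ⟨hsub, hcard⟩ := hBf j hji
      refine ⟨?_, hjC ▸ hcard⟩
      intro g hg
      rw [Finset.mem_sdiff]
      refine ⟨Finset.mem_univ g, fun hgi => ?_⟩
      exact (Finset.disjoint_left.mp (hA.1 j i hji)) (hsub (hjC ▸ hg)) hgi
  refine ⟨C, hCprop.1, hCprop.2, ?_⟩
  have hsum : ∑ j ∈ Finset.univ.erase i, util u i (Bf j)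
      ≤ ((n : ℝ) - 1) * util u i C := by
    have h1 : ∑ j ∈ Finset.univ.erase i, util u i (Bf j)
        ≤ (Finset.univ.erase i).card • util u i C := by
      apply Finset.sum_le_card_nsmul
      intro j hj
      exact hCmax (Bf j) (Finset.mem_insert_of_mem (Finset.mem_image_of_mem _ hj))
    have hcard : (Finset.univ.erase i).card = n - 1 := by
      rw [Finset.card_erase_of_mem (Finset.mem_univ i), Finset.card_univ, Fintype.card_fin]
    rw [hcard, nsmul_eq_mul] at h1
    have : ((n - 1 : ℕ) : ℝ) = (n : ℝ) - 1 := by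
      have : 1 ≤ n := le_trans (by norm_num) hn
      push_cast [this]; ring
    linarith [h1, this ▸ h1]
  have hkey : x * ∑ j ∈ Finset.univ.erase i, util u i (Bf j)
      ≤ (n : ℝ) * x' * util u i C := by
    have h2 : ((n : ℝ) - 1) * x ≤ (n : ℝ) * x' := by
      have := mul_le_mul_of_nonneg_left hxx' (le_of_lt hn0)
      have hne : (n : ℝ) ≠ 0 := ne_of_gt hn0
      field_simp at this
      nlinarith [this]
    nlinarith [hun C, hx.1, hsum, mul_le_mul_of_nonneg_right h2 (hun C)]
  have hwN : (0 : ℝ) < ∑ j, w j := Finset.sum_pos (fun j _ => hw j) ⟨i, Finset.mem_univ i⟩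
  have hL : (util u i (A i) + y * util u i B) / w i
      ≤ (util u i (A i) + y * util u i C) / w i := by
    have : util u i (A i) + y * util u i B ≤ util u i (A i) + y * util u i C := by
      nlinarith [hy.1]
    exact (div_le_div_iff_of_pos_right (hw i)).mpr this
  have hR : (util u i Finset.univ - (n : ℝ) * x' * util u i C) / (∑ j, w j)
      ≤ (util u i Finset.univ - x * ∑ j ∈ Finset.univ.erase i, util u i (Bf j)) / (∑ j, w j) :=
    (div_le_div_iff_of_pos_right hwN).mpr (by linarith [hkey])
  calc (util u i Finset.univ - (n : ℝ) * x' * util u i C) / (∑ j, w j)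
      ≤ (util u i Finset.univ - x * ∑ j ∈ Finset.univ.erase i, util u i (Bf j)) / (∑ j, w j) := hR
    _ ≤ (util u i (A i) + y * util u i B) / w i := hineq
    _ ≤ (util u i (A i) + y * util u i C) / w i := hL
end

section
/- For all x, y ∈ [0,1], every allocation satisfying WEF(x,y) also satisfies WPROP(x,y). -/
open Finset

/-- WEF(x,y) implies WPROP(x,y). -/
theorem wef_implies_wprop (n m : ℕ) (hn : 2 ≤ n)
    (w : Fin n → ℝ) (hw : ∀ i, 0 < w i)
    (u : Fin n → Fin m → ℝ) (hu : ∀ i g, 0 ≤ u i g)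
    (x y : ℝ) (hx : x ∈ Set.Icc (0 : ℝ) 1) (hy : y ∈ Set.Icc (0 : ℝ) 1)
    (A : Fin n → Finset (Fin m)) (hA : IsAllocation A)
    (hWEF : WEF w u A x y) :
    WPROP w u A x y := by
  classical
  obtain ⟨hdisj, hcov⟩ := hA
  obtain ⟨hx0, hx1⟩ := hx
  obtain ⟨hy0, hy1⟩ := hy
  intro i
  choose B hBsub hBcard hBineq using hWEF i
  have hW : 0 < ∑ j, w j := Finset.sum_pos (fun j _ => hw j) ⟨i, Finset.mem_univ i⟩
  have hut : ∀ S, 0 ≤ util u i S := fun S => Finset.sum_nonneg fun g _ => hu i g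
  have huniv : util u i Finset.univ = ∑ j, util u i (A j) := by
    unfold util
    rw [← hcov, Finset.sum_biUnion]
    exact fun a _ b _ hab => hdisj a b hab
  have hne : (Finset.univ.erase i).Nonempty := by
    rw [← Finset.card_pos, Finset.card_erase_of_mem (Finset.mem_univ i),
      Finset.card_univ, Fintype.card_fin]
    omega
  obtain ⟨j0, hj0mem, hj0max⟩ :=
    Finset.exists_max_image (Finset.univ.erase i) (fun j => util u i (B j)) hne
  have hj0ne : j0 ≠ i := Finset.ne_of_mem_erase hj0mem
  -- b j : utility of chosen bundle, with 0 for j = i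
  set b : Fin n → ℝ := fun j => if j = i then 0 else util u i (B j) with hbdef
  have hbstar : 0 ≤ util u i (B j0) := hut _
  have hb_le : ∀ j, b j ≤ util u i (B j0) := by
    intro j
    by_cases h : j = i
    · simp [hbdef, h, hbstar]
    · simpa [hbdef, h] using hj0max j (Finset.mem_erase.mpr ⟨h, Finset.mem_univ j⟩)
  have hb_nonneg : ∀ j, 0 ≤ b j := by
    intro j; by_cases h : j = i <;> simp [hbdef, h, hut]
  -- per-agent inequality
  have hkey : ∀ j, (util u i (A j) - x * b j) * w i ≤ (util u i (A i) + y * b j) * w j := by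
    intro j
    by_cases h : j = i
    · subst h; simp [hbdef]
    · have := hBineq j
      rw [ge_iff_le, div_le_div_iff₀ (hw j) (hw i)] at this
      simpa [hbdef, h] using this
  have hsum := Finset.sum_le_sum (fun j (_ : j ∈ Finset.univ) => hkey j)
  have e1 : ∑ j, (util u i (A j) - x * b j) * w i
      = (util u i Finset.univ - x * ∑ j, b j) * w i := by
    rw [huniv, Finset.mul_sum, sub_mul, Finset.sum_mul, Finset.sum_mul, ← Finset.sum_sub_distrib]
    ring_nf
    exact Finset.sum_congr rfl fun j _ => by ring
  have e2 : ∑ j, (util u i (A i) + y * b j) * w j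
      = util u i (A i) * ∑ j, w j + y * ∑ j, b j * w j := by
    rw [Finset.mul_sum, Finset.mul_sum, ← Finset.sum_add_distrib]
    apply Finset.sum_congr rfl
    intro j _
    ring
  rw [e1, e2] at hsum
  -- bounds on sums
  have hs1 : ∑ j, b j ≤ (n : ℝ) * util u i (B j0) := by
    calc ∑ j, b j ≤ ∑ _j : Fin n, util u i (B j0) :=
          Finset.sum_le_sum (fun j _ => hb_le j)
      _ = (n : ℝ) * util u i (B j0) := by
          simp [Finset.sum_const, Finset.card_univ, mul_comm]
  have hs2 : ∑ j, b j * w j ≤ util u i (B j0) * ∑ j, w j := by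
    rw [Finset.mul_sum]
    exact Finset.sum_le_sum fun j _ =>
      mul_le_mul_of_nonneg_right (hb_le j) (hw j).le
  refine ⟨B j0, ?_, hBcard j0, ?_⟩
  · intro g hg
    rw [Finset.mem_sdiff]
    exact ⟨Finset.mem_univ g, fun hgi =>
      (Finset.disjoint_left.mp (hdisj j0 i hj0ne) (hBsub j0 hg)) hgi⟩
  · rw [ge_iff_le, div_le_div_iff₀ hW (hw i)]
    have h1 : (util u i Finset.univ - (n : ℝ) * x * util u i (B j0)) * w i
        ≤ (util u i Finset.univ - x * ∑ j, b j) * w i := by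
      apply mul_le_mul_of_nonneg_right _ (hw i).le
      have : x * ∑ j, b j ≤ x * ((n : ℝ) * util u i (B j0)) :=
        mul_le_mul_of_nonneg_left hs1 hx0
      nlinarith
    have h2 : util u i (A i) * ∑ j, w j + y * ∑ j, b j * w j
        ≤ (util u i (A i) + y * util u i (B j0)) * ∑ j, w j := by
      have : y * ∑ j, b j * w j ≤ y * (util u i (B j0) * ∑ j, w j) :=
        mul_le_mul_of_nonneg_left hs2 hy0
      nlinarith
    linarith
end

section
/- For any x, x', y, y' ∈ [0,1] such that x' + y < 1 or x + y' < 1, there exists an instance in which all items are identical and no allocation satisfies both WPROP(x,y) and WPROP(x',y'). -/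
open Finset

lemma util_const_one {n m : ℕ} (i : Fin n) (S : Finset (Fin m)) :
    util (fun _ _ => (1:ℝ)) i S = S.card := by simp [util]

lemma aux_incompat (x x' y y' : ℝ)
    (hx : x ∈ Set.Icc (0 : ℝ) 1) (hx' : x' ∈ Set.Icc (0 : ℝ) 1)
    (hy : y ∈ Set.Icc (0 : ℝ) 1) (hy' : y' ∈ Set.Icc (0 : ℝ) 1)
    (h : x' + y < 1) :
    ∃ (n m : ℕ) (w : Fin n → ℝ), 2 ≤ n ∧ (∀ i, 0 < w i) ∧
      ∀ A : Fin n → Finset (Fin m), IsAllocation A →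
        ¬(WPROP w (fun _ _ => (1 : ℝ)) A x y ∧ WPROP w (fun _ _ => (1 : ℝ)) A x' y') := by
  obtain ⟨hx0, hx1⟩ := hx
  obtain ⟨hx'0, hx'1⟩ := hx'
  obtain ⟨hy0, hy1⟩ := hy
  obtain ⟨hy'0, hy'1⟩ := hy'
  have hs : 0 < 1 - x' - y := by linarith
  -- choose the number of agents N
  obtain ⟨N, hN3, hNs⟩ : ∃ n : ℕ, 3 ≤ n ∧ (5:ℝ) ≤ ((n:ℝ) - 1) * (1 - x' - y) := by
    refine ⟨⌈(5:ℝ)/(1 - x' - y)⌉₊ + 2, ?_, ?_⟩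
    · have h0 : (0:ℝ) < 5/(1 - x' - y) := by positivity
      have := Nat.ceil_pos.mpr h0
      omega
    · have h1 : (5:ℝ)/(1 - x' - y) ≤ ((⌈(5:ℝ)/(1 - x' - y)⌉₊ + 2 : ℕ) : ℝ) - 1 := by
        push_cast
        linarith [Nat.le_ceil ((5:ℝ)/(1 - x' - y))]
      calc (5:ℝ) = (5/(1 - x' - y)) * (1 - x' - y) := by field_simp
      _ ≤ _ := mul_le_mul_of_nonneg_right h1 hs.le
  have hN3R : (3:ℝ) ≤ (N:ℝ) := by exact_mod_cast hN3
  obtain ⟨P, hP_def⟩ : ∃ P : ℝ, P = (N:ℝ) - 1 - N * x' - y' := ⟨_, rfl⟩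
  have key1 : y * ((N:ℝ) - 1) + 2 < P := by
    have e2 : ((N:ℝ) - 1) * (1 - x' - y) =
        (N:ℝ) - 1 - ((N:ℝ) * x' - x') - (y * ((N:ℝ) - 1)) := by ring
    rw [e2] at hNs
    rw [hP_def]
    linarith
  have hyN : 0 ≤ y * ((N:ℝ) - 1) := mul_nonneg hy0 (by linarith)
  have hP2 : (2:ℝ) < P := by linarith
  have hP1 : (0:ℝ) < P - 1 := by linarith
  have hNx' : 0 ≤ (N:ℝ) * x' := mul_nonneg (Nat.cast_nonneg N) hx'0
  have hNx : 0 ≤ (N:ℝ) * x := mul_nonneg (Nat.cast_nonneg N) hx0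
  -- choose the number of items m
  obtain ⟨m, hm⟩ : ∃ m : ℕ, (N:ℝ) * P < (m:ℝ) := by
    refine ⟨⌈(N:ℝ) * P⌉₊ + 1, ?_⟩
    push_cast
    linarith [Nat.le_ceil ((N:ℝ) * P)]
  have hm0 : (0:ℝ) < (m:ℝ) := by nlinarith
  obtain ⟨T, hT_def⟩ : ∃ T : ℝ, T = (m:ℝ) * ((N:ℝ) - 1) / (P - 1) := ⟨_, rfl⟩
  have hTP : T * (P - 1) = (m:ℝ) * ((N:ℝ) - 1) := by
    rw [hT_def]; exact div_mul_cancel₀ _ (ne_of_gt hP1)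
  have hT0 : 0 < T := by
    rw [hT_def]; exact div_pos (mul_pos hm0 (by linarith)) hP1
  have hPN : P - 1 < (N:ℝ) - 1 := by rw [hP_def]; linarith
  have hTm : (m:ℝ) < T := by
    rw [hT_def, lt_div_iff₀ hP1]
    exact (mul_lt_mul_iff_right₀ hm0).mpr hPN
  have hNm : (N:ℝ) - 1 < (m:ℝ) := by
    have h1 : (N:ℝ) * 2 < (N:ℝ) * P := (mul_lt_mul_iff_right₀ (by linarith)).mpr hP2
    linarith
  obtain ⟨v, hv_def⟩ : ∃ v : ℝ, v = T - ((N:ℝ) - 1) := ⟨_, rfl⟩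
  have hv0 : 0 < v := by rw [hv_def]; linarith
  have hvP : v * (P - 1) = (m:ℝ) * ((N:ℝ) - 1) - ((N:ℝ) - 1) * (P - 1) := by
    rw [hv_def, sub_mul, hTP]
  haveI : NeZero N := ⟨by omega⟩
  obtain ⟨w, hw_def⟩ : ∃ w : Fin N → ℝ, w = fun i => if i = 0 then v else 1 := ⟨_, rfl⟩
  have hwpos : ∀ i, 0 < w i := by
    intro i
    rw [hw_def]
    dsimp only
    split
    · exact hv0
    · exact one_pos
  have hw0 : w 0 = v := by rw [hw_def]; simp
  have hsumT : ∑ j, w j = T := by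
    have h1 : ∑ i : Fin N, w i = ∑ i : Fin N, ((if i = (0 : Fin N) then v - 1 else 0) + 1) := by
      apply Finset.sum_congr rfl
      intro i _
      by_cases hi : i = 0 <;> simp [hw_def, hi]
    rw [h1, Finset.sum_add_distrib, Finset.sum_ite_eq' Finset.univ (0 : Fin N) (fun _ => v - 1)]
    simp only [Finset.mem_univ, if_true, Finset.sum_const, Finset.card_univ, Fintype.card_fin,
      nsmul_eq_mul, mul_one, hv_def]
    ring
  refine ⟨N, m, w, by omega, hwpos, ?_⟩
  rintro A hAlloc ⟨h1, h2⟩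
  have hAcard : ∑ i, (A i).card = m := by
    have hd := hAlloc.1
    have hu := hAlloc.2
    calc ∑ i, (A i).card = (Finset.univ.biUnion A).card :=
          (Finset.card_biUnion (fun i _ j _ hij => hd i j hij)).symm
    _ = m := by rw [hu, Finset.card_univ, Fintype.card_fin]
  by_cases hne : ∀ i : Fin N, i ≠ 0 → (A i).Nonempty
  · -- the heavy agent 0 fails WPROP x' y'
    have hksum : (N - 1) + (A 0).card ≤ m := by
      have h3 : ∀ i ∈ Finset.univ.erase (0 : Fin N), 1 ≤ (A i).card := by
        intro i hi
        exact Finset.card_pos.mpr (hne i (Finset.ne_of_mem_erase hi))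
      have h4 : (Finset.univ.erase (0 : Fin N)).card ≤
          ∑ i ∈ Finset.univ.erase (0:Fin N), (A i).card := by
        calc (Finset.univ.erase (0 : Fin N)).card
            = ∑ _i ∈ Finset.univ.erase (0:Fin N), 1 := by simp
        _ ≤ _ := Finset.sum_le_sum h3
      have h5 : (Finset.univ.erase (0 : Fin N)).card = N - 1 := by
        rw [Finset.card_erase_of_mem (Finset.mem_univ _), Finset.card_univ, Fintype.card_fin]
      have h6 : ∑ i ∈ Finset.univ.erase (0:Fin N), (A i).card + (A 0).card = m := by
        rw [Finset.sum_erase_add _ _ (Finset.mem_univ _), hAcard]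
      omega
    have hkR : ((A 0).card : ℝ) ≤ (m:ℝ) - (N:ℝ) + 1 := by
      have h5 : (A 0).card + N ≤ m + 1 := by omega
      have h6 := (Nat.cast_le (α := ℝ)).mpr h5
      push_cast at h6
      linarith
    have hk0 : (0:ℝ) ≤ ((A 0).card : ℝ) := Nat.cast_nonneg _
    obtain ⟨B, hB1, hB2, hineq⟩ := h2 0
    rw [util_const_one, util_const_one, util_const_one] at hineq
    rw [hw0, hsumT, Finset.card_univ, Fintype.card_fin] at hineq
    have hBcard : B.card = 0 ∨ B.card = 1 := by omega
    rcases hBcard with hb | hb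
    · rw [hb] at hineq
      simp only [Nat.cast_zero] at hineq
      have hlt : (((A 0).card : ℝ) + y' * 0) / v < ((m:ℝ) - (N:ℝ) * x' * 0) / T := by
        rw [div_lt_div_iff₀ hv0 hT0]
        have key : ((m:ℝ) - (N:ℝ)*x'*0) * v * (P-1) - (((A 0).card : ℝ) + y'*0) * T * (P-1) =
            ((N:ℝ) - 1) * (m:ℝ) *
              (((m:ℝ) - (N:ℝ) + 1 - ((A 0).card : ℝ)) + 1 + (N:ℝ)*x' + y') := by
          rw [mul_assoc (((A 0).card : ℝ) + y'*0) T, hTP]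
          rw [mul_assoc _ v (P-1), hvP, hP_def]
          ring
        have hpos : 0 < ((N:ℝ) - 1) * (m:ℝ) *
            (((m:ℝ) - (N:ℝ) + 1 - ((A 0).card : ℝ)) + 1 + (N:ℝ)*x' + y') := by
          apply mul_pos (mul_pos (by linarith) hm0)
          linarith
        have h11 : (((A 0).card : ℝ) + y'*0) * T * (P-1) <
            ((m:ℝ) - (N:ℝ)*x'*0) * v * (P-1) := by linarith
        exact (mul_lt_mul_iff_left₀ hP1).mp h11
      linarith
    · rw [hb] at hineq
      simp only [Nat.cast_one] at hineq
      have hlt : (((A 0).card : ℝ) + y' * 1) / v < ((m:ℝ) - (N:ℝ) * x' * 1) / T := by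
        rw [div_lt_div_iff₀ hv0 hT0]
        have key : ((m:ℝ) - (N:ℝ)*x'*1) * v * (P-1) - (((A 0).card : ℝ) + y'*1) * T * (P-1) =
            ((N:ℝ) - 1) * ((m:ℝ) * ((m:ℝ) - (N:ℝ) + 1 - ((A 0).card : ℝ)) + (m:ℝ)
              + (N:ℝ)*x'*(P-1)) := by
          rw [mul_assoc (((A 0).card : ℝ) + y'*1) T, hTP]
          rw [mul_assoc _ v (P-1), hvP, hP_def]
          ring
        have hpos : 0 < ((N:ℝ) - 1) *
            ((m:ℝ) * ((m:ℝ) - (N:ℝ) + 1 - ((A 0).card : ℝ)) + (m:ℝ) + (N:ℝ)*x'*(P-1)) := by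
          apply mul_pos (by linarith)
          have h7 : 0 ≤ (m:ℝ) * ((m:ℝ) - (N:ℝ) + 1 - ((A 0).card : ℝ)) :=
            mul_nonneg hm0.le (by linarith)
          have h8 : 0 ≤ (N:ℝ)*x'*(P-1) := mul_nonneg hNx' hP1.le
          linarith
        have h11 : (((A 0).card : ℝ) + y'*1) * T * (P-1) <
            ((m:ℝ) - (N:ℝ)*x'*1) * v * (P-1) := by linarith
        exact (mul_lt_mul_iff_left₀ hP1).mp h11
      linarith
  · -- some light agent has an empty bundle and fails WPROP x y
    push_neg at hne
    obtain ⟨i, hi0, hiempty⟩ := hne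
    obtain ⟨B, hB1, hB2, hineq⟩ := h1 i
    rw [util_const_one, util_const_one, util_const_one] at hineq
    have hwi : w i = 1 := by rw [hw_def]; simp [hi0]
    rw [hwi, hsumT, Finset.card_univ, Fintype.card_fin, hiempty] at hineq
    simp only [Finset.card_empty, Nat.cast_zero] at hineq
    have hBcard : B.card = 0 ∨ B.card = 1 := by omega
    rcases hBcard with hb | hb
    · rw [hb] at hineq
      simp only [Nat.cast_zero] at hineq
      have hpos : (0:ℝ) < (m:ℝ) / T := div_pos hm0 hT0
      have hz : ((0:ℝ) + y * 0) / 1 = 0 := by ring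
      have hz2 : ((m:ℝ) - (N:ℝ) * x * 0) / T = (m:ℝ) / T := by ring
      rw [hz, hz2] at hineq
      linarith
    · rw [hb] at hineq
      simp only [Nat.cast_one] at hineq
      have hNxN : (N:ℝ) * x ≤ (N:ℝ) := by
        calc (N:ℝ) * x ≤ (N:ℝ) * 1 := mul_le_mul_of_nonneg_left hx1 (by linarith)
        _ = (N:ℝ) := by ring
      have hxP : (N:ℝ) * x * (P - 1) < (m:ℝ) := by
        have h9 : (N:ℝ) * x * (P - 1) ≤ (N:ℝ) * (P - 1) :=
          mul_le_mul_of_nonneg_right hNxN hP1.le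
        have h10 : (N:ℝ) * (P - 1) = (N:ℝ) * P - (N:ℝ) := by ring
        linarith
      have hyT : y * T < (m:ℝ) - (N:ℝ) * x := by
        have h9 : y * T * (P - 1) = y * ((m:ℝ) * ((N:ℝ) - 1)) := by
          rw [mul_assoc y T, hTP]
        have ha : (m:ℝ) * (y * ((N:ℝ) - 1)) < (m:ℝ) * (P - 2) :=
          (mul_lt_mul_iff_right₀ hm0).mpr (by linarith)
        have h10 : y * ((m:ℝ) * ((N:ℝ) - 1)) < ((m:ℝ) - (N:ℝ)*x) * (P - 1) := by nlinarith
        have h12 : y * T * (P - 1) < ((m:ℝ) - (N:ℝ)*x) * (P - 1) := by linarith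
        exact (mul_lt_mul_iff_left₀ hP1).mp h12
      have hlt : ((0:ℝ) + y * 1) / 1 < ((m:ℝ) - (N:ℝ) * x * 1) / T := by
        rw [div_one, lt_div_iff₀ hT0]
        have he : (0 + y * 1) * T = y * T := by ring
        rw [he]
        linarith
      linarith

/-- If x' + y < 1 or x + y' < 1, there is an identical-item instance in which
no allocation satisfies both WPROP(x,y) and WPROP(x',y'). -/
theorem wprop_incompatible (x x' y y' : ℝ)
    (hx : x ∈ Set.Icc (0 : ℝ) 1) (hx' : x' ∈ Set.Icc (0 : ℝ) 1)
    (hy : y ∈ Set.Icc (0 : ℝ) 1) (hy' : y' ∈ Set.Icc (0 : ℝ) 1)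
    (h : x' + y < 1 ∨ x + y' < 1) :
    ∃ (n m : ℕ) (w : Fin n → ℝ), 2 ≤ n ∧ (∀ i, 0 < w i) ∧
      ∀ A : Fin n → Finset (Fin m), IsAllocation A →
        ¬(WPROP w (fun _ _ => (1 : ℝ)) A x y ∧ WPROP w (fun _ _ => (1 : ℝ)) A x' y') := by
  rcases h with h1 | h1
  · exact aux_incompat x x' y y' hx hx' hy hy' h1
  · obtain ⟨n, m, w, hn, hw, hA⟩ := aux_incompat x' x y' y hx' hx hy' hy h1
    exact ⟨n, m, w, hn, hw, fun A hAl hc => hA A hAl ⟨hc.2, hc.1⟩⟩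
end

section
/- For every n ≥ 2 and every α > 1/n, there exists an instance with n agents in which no allocation is α-NMMS. -/
open Finset

/-- For every n ≥ 2 and α > 1/n, there is an instance with n agents
in which no allocation is α-NMMS. -/
theorem nmms_no_better_than_inv_n (n : ℕ) (hn : 2 ≤ n) (α : ℝ) (hα : 1 / (n : ℝ) < α) :
    ∃ (m : ℕ) (w : Fin n → ℝ) (u : Fin n → Fin m → ℝ),
      (∀ i, 0 < w i) ∧ (∀ i g, 0 ≤ u i g) ∧
      ∀ A : Fin n → Finset (Fin m), IsAllocation A →
        ¬ ∀ i, util u i (A i) ≥ α * NMMS w u i := by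
  have hn0 : (0:ℝ) < n := by positivity
  have hnn : (2:ℝ) ≤ n := by exact_mod_cast hn
  have hα0 : 0 < α := lt_trans (by positivity) hα
  have hαn : 1 < α * n := by
    rw [div_lt_iff₀ hn0] at hα; linarith
  set t : ℝ := ((n:ℝ) - 1) / (α * n - 1) + 1 with ht_def
  have ht0 : 0 < t := by
    rw [ht_def]
    have : 0 ≤ ((n:ℝ) - 1) / (α * n - 1) := by
      apply div_nonneg <;> linarith
    linarith
  have htkey : t + ((n:ℝ) - 1) < α * n * t := by
    have h1 : (n:ℝ) - 1 < t * (α * n - 1) := by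
      rw [ht_def]
      have : ((n:ℝ) - 1) / (α * n - 1) * (α * n - 1) = (n:ℝ) - 1 :=
        div_mul_cancel₀ _ (by linarith)
      nlinarith
    nlinarith
  haveI : NeZero n := ⟨by omega⟩
  set i0 : Fin n := ⟨0, by omega⟩ with hi0
  refine ⟨n, fun i => if i = i0 then t else 1, fun _ _ => 1, ?_, by intro _ _; norm_num, ?_⟩
  · intro i; dsimp only; split <;> norm_num [ht0]
  intro A hA hgood
  -- util equals card
  have hutil : ∀ (i : Fin n) (S : Finset (Fin n)), util (fun _ _ => (1:ℝ)) i S = S.card := by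
    intro i S; simp [util]
  -- total weight
  have hW : (∑ j, (if j = i0 then t else (1:ℝ))) = t + ((n:ℝ) - 1) := by
    rw [← Finset.add_sum_erase _ _ (Finset.mem_univ i0)]
    rw [if_pos rfl]
    congr 1
    rw [Finset.sum_congr rfl (fun j hj => if_neg (Finset.ne_of_mem_erase hj))]
    rw [Finset.sum_const, Finset.card_erase_of_mem (Finset.mem_univ i0), Finset.card_univ,
      Fintype.card_fin]
    rw [nsmul_eq_mul, Nat.cast_sub (by omega : 1 ≤ n), mul_one]
    push_cast
    ring
  have hW0 : (0:ℝ) < t + ((n:ℝ) - 1) := by linarith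
  -- MMS lower bound
  have hMMS : ∀ i : Fin n, 1 ≤ MMS (m := n) (fun _ _ => (1:ℝ)) i := by
    intro i
    apply le_csSup
    · refine ⟨(n:ℝ), ?_⟩
      rintro v ⟨Z, hZ, rfl⟩
      refine le_trans (ciInf_le (Set.Finite.bddBelow (Set.finite_range _)) i0) ?_
      rw [hutil]
      exact_mod_cast le_trans (Finset.card_le_card (Finset.subset_univ _))
        (le_of_eq (by simp))
    · refine ⟨fun j => {j}, ⟨?_, ?_⟩, ?_⟩
      · intro a b hab
        simp only [Finset.disjoint_singleton]
        exact hab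
      · ext g; simp
      · rw [show (fun j => util (fun _ _ => (1:ℝ)) i ({j} : Finset (Fin n))) = fun _ => 1 from
          funext fun j => by rw [hutil]; simp]
        rw [ciInf_const]
  -- per agent lower bound on card
  have hcard : ∀ i : Fin n,
      α * (if i = i0 then t else 1) * (n:ℝ) / (t + ((n:ℝ) - 1)) ≤ ((A i).card : ℝ) := by
    intro i
    have h := hgood i
    rw [hutil] at h
    unfold NMMS at h
    rw [hW] at h
    have hwpos : (0:ℝ) < (if i = i0 then t else 1) := by split <;> norm_num [ht0]
    have hcoef : 0 ≤ α * ((if i = i0 then t else 1) / (t + ((n:ℝ) - 1)) * n) := by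
      positivity
    have := mul_le_mul_of_nonneg_left (hMMS i) hcoef
    calc α * (if i = i0 then t else 1) * (n:ℝ) / (t + ((n:ℝ) - 1))
        = α * ((if i = i0 then t else 1) / (t + ((n:ℝ) - 1)) * n) * 1 := by ring
      _ ≤ α * ((if i = i0 then t else 1) / (t + ((n:ℝ) - 1)) * n * MMS (m := n) (fun _ _ => (1:ℝ)) i) := by
          nlinarith
      _ ≤ ((A i).card : ℝ) := by
          have : α * ((if i = i0 then t else 1) / (t + ((n:ℝ) - 1)) * ↑n * MMS (m := n) (fun _ _ => (1:ℝ)) i)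
              = α * ((if i = i0 then t else 1) / (t + ((n:ℝ) - 1)) * ↑n * MMS (m := n) (fun _ _ => (1:ℝ)) i) := rfl
          linarith [h]
  -- agent i0 gets at least 2 items
  have hc0 : 2 ≤ (A i0).card := by
    have h := hcard i0
    rw [if_pos rfl] at h
    have h1 : 1 < ((A i0).card : ℝ) := by
      refine lt_of_lt_of_le ?_ h
      rw [lt_div_iff₀ hW0]
      nlinarith
    exact_mod_cast Nat.lt_iff_add_one_le.mp (by exact_mod_cast h1)
  -- others get at least 1 item
  have hc1 : ∀ i : Fin n, i ≠ i0 → 1 ≤ (A i).card := by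
    intro i hi
    have h := hcard i
    rw [if_neg hi] at h
    have h1 : 0 < ((A i).card : ℝ) := by
      refine lt_of_lt_of_le ?_ h
      positivity
    exact_mod_cast Nat.pos_of_ne_zero (by exact_mod_cast h1.ne')
  -- total card is n
  have hsum : ∑ i, (A i).card = n := by
    rw [← Finset.card_biUnion (fun x _ y _ hxy => hA.1 x y hxy), hA.2, Finset.card_univ,
      Fintype.card_fin]
  -- contradiction
  have hge : n + 1 ≤ ∑ i, (A i).card := by
    rw [← Finset.add_sum_erase _ _ (Finset.mem_univ i0)]
    have : (n - 1 : ℕ) ≤ ∑ i ∈ Finset.univ.erase i0, (A i).card := by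
      calc (n - 1 : ℕ) = ∑ _i ∈ Finset.univ.erase i0, 1 := by
            rw [Finset.sum_const, Finset.card_erase_of_mem (Finset.mem_univ i0),
              Finset.card_univ, Fintype.card_fin, smul_eq_mul, mul_one]
        _ ≤ _ := Finset.sum_le_sum fun i hi => hc1 i (Finset.ne_of_mem_erase hi)
    omega
  omega
end

section
/- Every allocation satisfying WPROP*(1,0) is 1/n-NMMS. -/
open Finset

lemma util_nonneg' {n m : ℕ} (u : Fin n → Fin m → ℝ) (hu : ∀ i g, 0 ≤ u i g)
    (i : Fin n) (S : Finset (Fin m)) : 0 ≤ util u i S :=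
  Finset.sum_nonneg fun g _ => hu i g

lemma util_mono' {n m : ℕ} (u : Fin n → Fin m → ℝ) (hu : ∀ i g, 0 ≤ u i g)
    (i : Fin n) {S T : Finset (Fin m)} (h : S ⊆ T) : util u i S ≤ util u i T :=
  Finset.sum_le_sum_of_subset_of_nonneg h fun g _ _ => hu i g

/-- Every WPROP*(1,0) allocation is 1/n-NMMS. -/
theorem wpropstar_implies_inv_n_nmms (n m : ℕ) (hn : 2 ≤ n)
    (w : Fin n → ℝ) (hw : ∀ i, 0 < w i)
    (u : Fin n → Fin m → ℝ) (hu : ∀ i g, 0 ≤ u i g)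
    (A : Fin n → Finset (Fin m)) (hA : IsAllocation A)
    (hstar : WPROPstar w u A 1 0) :
    ∀ i, util u i (A i) ≥ (1 / (n : ℝ)) * NMMS w u i := by
  intro i
  obtain ⟨B, hB, hBcard, Bf, hBf, hineq⟩ := hstar i
  set W := ∑ j, w j with hW
  have hWpos : 0 < W := Finset.sum_pos (fun j _ => hw j) ⟨⟨0, by omega⟩, mem_univ _⟩
  set D : Finset (Fin m) := (univ.erase i).biUnion Bf with hD
  -- cardinality of D
  have hDcard : D.card < n := by
    have h1 : D.card ≤ ∑ j ∈ univ.erase i, (Bf j).card := Finset.card_biUnion_le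
    have h2 : ∑ j ∈ univ.erase i, (Bf j).card ≤ ∑ _j ∈ univ.erase i, 1 :=
      Finset.sum_le_sum fun j hj => (hBf j (Finset.ne_of_mem_erase hj)).2
    have h3 : ∑ _j ∈ univ.erase i, 1 = n - 1 := by
      rw [Finset.sum_const, smul_eq_mul, mul_one, Finset.card_erase_of_mem (mem_univ i),
        Finset.card_univ, Fintype.card_fin]
    omega
  -- sum over erase i equals util of D
  have hsumD : ∑ j ∈ univ.erase i, util u i (Bf j) = util u i D := by
    rw [hD]
    unfold util
    rw [Finset.sum_biUnion]
    intro j hj k hk hjk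
    exact (hA.1 j k hjk).mono (hBf j (by simpa using hj)).1
      (hBf k (by simpa using hk)).1
  -- util univ - util D = util (univ \ D)
  have hsplit : util u i Finset.univ - util u i D = util u i (Finset.univ \ D) := by
    unfold util
    have := Finset.sum_sdiff (f := u i) (Finset.subset_univ D)
    linarith
  -- MMS bound
  have hMMS : MMS u i ≤ util u i (Finset.univ \ D) := by
    apply Real.sSup_le _ (util_nonneg' u hu i _)
    rintro v ⟨Z, hZ, rfl⟩
    -- pigeonhole: some bundle of Z avoids D
    have hpig : ∃ k, Disjoint (Z k) D := by
      by_contra hcon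
      push_neg at hcon
      have hfk : ∀ k, ∃ g, g ∈ Z k ∧ g ∈ D := fun k =>
        Finset.not_disjoint_iff.mp (hcon k)
      choose f hf using hfk
      have hinj : Function.Injective f := by
        intro a b hab
        by_contra hne
        exact (Finset.disjoint_left.mp (hZ.1 a b hne) (hf a).1) (hab ▸ (hf b).1)
      have hsub : Finset.image f univ ⊆ D := by
        intro x hx
        obtain ⟨k, _, rfl⟩ := Finset.mem_image.mp hx
        exact (hf k).2
      have := Finset.card_le_card hsub
      rw [Finset.card_image_of_injective _ hinj, Finset.card_univ, Fintype.card_fin] at this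
      omega
    obtain ⟨k, hk⟩ := hpig
    have h1 : (⨅ j, util u i (Z j)) ≤ util u i (Z k) :=
      ciInf_le (Set.Finite.bddBelow (Set.finite_range _)) k
    have h2 : util u i (Z k) ≤ util u i (Finset.univ \ D) :=
      util_mono' u hu i (Finset.subset_sdiff.mpr ⟨Finset.subset_univ _, hk⟩)
    linarith
  -- from the WPROP* inequality
  have hkey : (util u i Finset.univ - ∑ j ∈ univ.erase i, util u i (Bf j)) * w i
      ≤ util u i (A i) * W := by
    have h := hineq
    rw [ge_iff_le, div_le_div_iff₀ hWpos (hw i)] at h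
    linarith
  have hC : util u i Finset.univ - ∑ j ∈ univ.erase i, util u i (Bf j)
      = util u i (Finset.univ \ D) := by rw [hsumD]; exact hsplit
  rw [hC] at hkey
  -- conclude
  have hwW : 0 ≤ w i / W := le_of_lt (div_pos (hw i) hWpos)
  have h4 : (w i / W) * MMS u i ≤ (w i / W) * util u i (Finset.univ \ D) :=
    mul_le_mul_of_nonneg_left hMMS hwW
  have h5 : (w i / W) * util u i (Finset.univ \ D) ≤ util u i (A i) := by
    rw [div_mul_eq_mul_div, div_le_iff₀ hWpos]
    linarith
  have hn0 : (n : ℝ) ≠ 0 := by positivity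
  unfold NMMS
  rw [← hW]
  have : (1 / (n : ℝ)) * ((w i / W) * (n : ℝ) * MMS u i) = (w i / W) * MMS u i := by
    field_simp
  rw [this]
  linarith
end

section
/- Every OEF1 allocation is 1/n-NMMS. -/
open Finset

/-- Ordered-EF1: EF1 disregarding weights, and the agents can be renumbered so that
weights are nonincreasing and no agent envies a later agent. -/
def OEF1 {n m : ℕ} (w : Fin n → ℝ) (u : Fin n → Fin m → ℝ)
    (A : Fin n → Finset (Fin m)) : Prop :=
  (∀ i j : Fin n, ∃ B : Finset (Fin m), B ⊆ A j ∧ B.card ≤ 1 ∧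
      util u i (A i) ≥ util u i (A j) - util u i B) ∧
  ∃ σ : Equiv.Perm (Fin n),
    (∀ i j : Fin n, i ≤ j → w (σ j) ≤ w (σ i)) ∧
    (∀ i j : Fin n, i < j → util u (σ i) (A (σ i)) ≥ util u (σ i) (A (σ j)))

/-- Every OEF1 allocation is 1/n-NMMS. -/
theorem oef1_implies_inv_n_nmms (n m : ℕ) (hn : 2 ≤ n)
    (w : Fin n → ℝ) (hw : ∀ i, 0 < w i)
    (u : Fin n → Fin m → ℝ) (hu : ∀ i g, 0 ≤ u i g)
    (A : Fin n → Finset (Fin m)) (hA : IsAllocation A)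
    (hOEF1 : OEF1 w u A) :
    ∀ i, util u i (A i) ≥ (1 / (n : ℝ)) * NMMS w u i := by
  classical
  intro i
  have hn0 : (0:ℝ) < (n:ℝ) := by
    have : 0 < n := by omega
    exact_mod_cast this
  obtain ⟨hEF1, σ, hmono, hord⟩ := hOEF1
  have hUnn : ∀ S : Finset (Fin m), 0 ≤ util u i S :=
    fun S => Finset.sum_nonneg fun g _ => hu i g
  set p : Fin n := σ.symm i with hpdef
  have hσp : σ p = i := Equiv.apply_symm_apply σ i
  choose B hBsub hBcard hBle using fun j : Fin n => hEF1 i (σ j)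
  set a : ℝ := util u i (A i) with hadef
  have hann : 0 ≤ a := hUnn _
  set T : Finset (Fin m) := (Finset.Iio p).biUnion B with hTdef
  have hBdisj : (↑(Finset.Iio p) : Set (Fin n)).PairwiseDisjoint B := by
    intro j hj k hk hjk
    exact (hA.1 (σ j) (σ k) (fun h => hjk (σ.injective h))).mono (hBsub j) (hBsub k)
  have hTcard : T.card ≤ p.val := by
    calc T.card ≤ ∑ j ∈ Finset.Iio p, (B j).card := Finset.card_biUnion_le
      _ ≤ ∑ j ∈ Finset.Iio p, 1 := Finset.sum_le_sum fun j _ => hBcard j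
      _ = p.val := by simp [Fin.card_Iio]
  have hTval : util u i T = ∑ j ∈ Finset.Iio p, util u i (B j) := by
    simp only [util, hTdef]
    exact Finset.sum_biUnion hBdisj
  have hpn1 : (p.val : ℝ) + 1 ≤ (n : ℝ) := by exact_mod_cast p.isLt
  -- key bound: for every allocation Z, the min bundle value is at most (p+1) * a
  have key : ∀ Z : Fin n → Finset (Fin m), IsAllocation Z →
      (⨅ j, util u i (Z j)) ≤ ((p.val : ℝ) + 1) * a := by
    intro Z hZ
    have hne : Nonempty (Fin n) := ⟨p⟩
    set L : ℝ := ⨅ j, util u i (Z j) with hLdef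
    have hLnn : 0 ≤ L := le_ciInf fun k => hUnn (Z k)
    have hLle : ∀ k, L ≤ util u i (Z k) :=
      fun k => ciInf_le (Set.finite_range _).bddBelow k
    set D : Finset (Fin n) := Finset.univ.filter (fun k => ¬ Disjoint (Z k) T) with hDdef
    have hDcard : D.card ≤ p.val := by
      have hd : (↑D : Set (Fin n)).PairwiseDisjoint (fun k => Z k ∩ T) := by
        intro j hj k hk hjk
        exact (hZ.1 j k hjk).mono Finset.inter_subset_left Finset.inter_subset_left
      calc D.card = ∑ k ∈ D, 1 := by simp
        _ ≤ ∑ k ∈ D, (Z k ∩ T).card := by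
            refine Finset.sum_le_sum fun k hk => ?_
            rw [Finset.one_le_card]
            rw [hDdef, Finset.mem_filter] at hk
            exact Finset.not_disjoint_iff_nonempty_inter.mp hk.2
        _ = (D.biUnion (fun k => Z k ∩ T)).card := (Finset.card_biUnion hd).symm
        _ ≤ T.card := Finset.card_le_card (by
            intro x hx
            simp only [Finset.mem_biUnion, Finset.mem_inter] at hx
            obtain ⟨k, _, _, hxT⟩ := hx
            exact hxT)
        _ ≤ p.val := hTcard
    set C : Finset (Fin n) := Finset.univ \ D with hCdef
    have hCcard : n - p.val ≤ C.card := by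
      have h1 : C.card = n - D.card := by
        rw [hCdef, Finset.card_sdiff_of_subset (Finset.subset_univ D), Finset.card_univ, Fintype.card_fin]
      omega
    have hlow : (C.card : ℝ) * L ≤ ∑ k ∈ C, util u i (Z k) := by
      calc (C.card : ℝ) * L = ∑ k ∈ C, L := by rw [Finset.sum_const, nsmul_eq_mul]
        _ ≤ ∑ k ∈ C, util u i (Z k) := Finset.sum_le_sum fun k _ => hLle k
    have hCdisjZ : (↑C : Set (Fin n)).PairwiseDisjoint Z := by
      intro j hj k hk hjk; exact hZ.1 j k hjk
    have hup : ∑ k ∈ C, util u i (Z k) ≤ util u i (Finset.univ \ T) := by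
      have h1 : ∑ k ∈ C, util u i (Z k) = util u i (C.biUnion Z) := by
        simp only [util]; exact (Finset.sum_biUnion hCdisjZ).symm
      rw [h1]
      refine Finset.sum_le_sum_of_subset_of_nonneg ?_ (fun g _ _ => hu i g)
      intro g hg
      simp only [Finset.mem_biUnion] at hg
      obtain ⟨k, hk, hgk⟩ := hg
      rw [hCdef, Finset.mem_sdiff, hDdef, Finset.mem_filter] at hk
      have hdisj : Disjoint (Z k) T := by
        by_contra hc
        exact hk.2 ⟨Finset.mem_univ k, hc⟩
      rw [Finset.mem_sdiff]
      exact ⟨Finset.mem_univ g, fun hgT => (Finset.disjoint_left.mp hdisj hgk) hgT⟩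
    have hsplit : util u i (Finset.univ \ T) = util u i Finset.univ - util u i T := by
      simp only [util]
      have := Finset.sum_sdiff (f := u i) (Finset.subset_univ T)
      linarith
    have hUnivVal : util u i Finset.univ = ∑ j, util u i (A (σ j)) := by
      have h1 : util u i Finset.univ = ∑ k, util u i (A k) := by
        simp only [util]
        rw [← hA.2]
        exact Finset.sum_biUnion (fun j _ k _ hjk => hA.1 j k hjk)
      rw [h1]
      exact (Equiv.sum_comp σ (fun k => util u i (A k))).symm
    have hterm : ∀ j : Fin n,
        util u i (A (σ j)) ≤ a + (if j ∈ Finset.Iio p then util u i (B j) else 0) := by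
      intro j
      rcases lt_trichotomy j p with h | h | h
      · rw [if_pos (Finset.mem_Iio.mpr h)]
        linarith [hBle j]
      · rw [if_neg (by simp [Finset.mem_Iio, h]), h, hσp, ← hadef]
        simp
      · rw [if_neg (by simp [Finset.mem_Iio, not_lt.mpr h.le])]
        have h2 := hord p j h
        rw [hσp, ← hadef] at h2
        linarith
    have hsum : ∑ j, util u i (A (σ j)) ≤ (n : ℝ) * a + util u i T := by
      calc ∑ j, util u i (A (σ j))
          ≤ ∑ j, (a + if j ∈ Finset.Iio p then util u i (B j) else 0) :=
            Finset.sum_le_sum fun j _ => hterm j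
        _ = (n : ℝ) * a + ∑ j ∈ Finset.Iio p, util u i (B j) := by
            rw [Finset.sum_add_distrib, Finset.sum_const, Finset.card_univ, Fintype.card_fin,
              nsmul_eq_mul, Finset.sum_ite_mem, Finset.univ_inter]
        _ = (n : ℝ) * a + util u i T := by rw [hTval]
    have hmain : ((n : ℝ) - p.val) * L ≤ (n : ℝ) * a := by
      have h0 : ((n - p.val : ℕ) : ℝ) * L ≤ (C.card : ℝ) * L :=
        mul_le_mul_of_nonneg_right (by exact_mod_cast hCcard) hLnn
      rw [Nat.cast_sub p.isLt.le] at h0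
      linarith
    nlinarith [hmain, hLnn, hann, hpn1,
      mul_nonneg (mul_nonneg (Nat.cast_nonneg p.val : (0:ℝ) ≤ (p.val : ℝ)) hann)
        (by linarith : (0:ℝ) ≤ (n:ℝ) - 1 - (p.val : ℝ))]
  have hSne : (⨅ j, util u i (A j)) ∈
      {v : ℝ | ∃ Z : Fin n → Finset (Fin m), IsAllocation Z ∧ v = ⨅ j, util u i (Z j)} :=
    ⟨A, hA, rfl⟩
  have hbdd : BddAbove {v : ℝ | ∃ Z : Fin n → Finset (Fin m), IsAllocation Z ∧
      v = ⨅ j, util u i (Z j)} := by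
    refine ⟨((p.val : ℝ) + 1) * a, fun v hv => ?_⟩
    obtain ⟨Z, hZ, rfl⟩ := hv
    exact key Z hZ
  have hMMSle : MMS u i ≤ ((p.val : ℝ) + 1) * a := by
    apply Real.sSup_le
    · rintro v ⟨Z, hZ, rfl⟩; exact key Z hZ
    · positivity
  have hne : Nonempty (Fin n) := ⟨p⟩
  have hMMSnn : 0 ≤ MMS u i := by
    have h1 : (0:ℝ) ≤ ⨅ j, util u i (A j) := le_ciInf fun k => hUnn (A k)
    exact h1.trans (le_csSup hbdd hSne)
  have hWpos : 0 < ∑ j, w j := Finset.sum_pos (fun j _ => hw j) ⟨p, Finset.mem_univ p⟩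
  have hWge : ((p.val : ℝ) + 1) * w i ≤ ∑ j, w j := by
    have h1 : ∑ j, w j = ∑ j, w (σ j) := (Equiv.sum_comp σ w).symm
    have h2 : ∑ j ∈ Finset.Iic p, w (σ j) ≤ ∑ j, w (σ j) :=
      Finset.sum_le_sum_of_subset_of_nonneg (Finset.subset_univ _) (fun j _ _ => (hw (σ j)).le)
    have h3 : ∑ j ∈ Finset.Iic p, w i ≤ ∑ j ∈ Finset.Iic p, w (σ j) := by
      refine Finset.sum_le_sum fun j hj => ?_
      have h4 := hmono j p (Finset.mem_Iic.mp hj)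
      rwa [hσp] at h4
    have h4 : ∑ j ∈ Finset.Iic p, w i = ((p.val : ℝ) + 1) * w i := by
      rw [Finset.sum_const, Fin.card_Iic, nsmul_eq_mul]
      push_cast
      ring
    linarith
  rw [ge_iff_le, NMMS]
  have hfrac : w i / (∑ j, w j) ≤ 1 / ((p.val : ℝ) + 1) := by
    rw [div_le_div_iff₀ hWpos (by positivity)]
    nlinarith [hWge]
  have hstep : (w i / (∑ j, w j)) * MMS u i ≤ a := by
    calc (w i / (∑ j, w j)) * MMS u i ≤ (1 / ((p.val : ℝ) + 1)) * MMS u i :=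
        mul_le_mul_of_nonneg_right hfrac hMMSnn
      _ ≤ (1 / ((p.val : ℝ) + 1)) * (((p.val : ℝ) + 1) * a) :=
        mul_le_mul_of_nonneg_left hMMSle (by positivity)
      _ = a := by field_simp
  calc 1 / (n:ℝ) * (w i / (∑ j, w j) * (n:ℝ) * MMS u i)
      = (w i / (∑ j, w j)) * MMS u i := by field_simp
    _ ≤ a := hstep
end

section
/- Every WMMS-fair allocation is 1/n-NMMS. -/
open Finset

/-- Every WMMS-fair allocation is 1/n-NMMS. -/
theorem wmms_implies_inv_n_nmms (n m : ℕ) (hn : 2 ≤ n)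
    (w : Fin n → ℝ) (hw : ∀ i, 0 < w i)
    (u : Fin n → Fin m → ℝ) (hu : ∀ i g, 0 ≤ u i g)
    (A : Fin n → Finset (Fin m)) (hA : IsAllocation A)
    (hWMMS : ∀ i, util u i (A i) ≥ WMMS w u i) :
    ∀ i, util u i (A i) ≥ (1 / (n : ℝ)) * NMMS w u i := by
  intro i
  haveI : NeZero n := ⟨by omega⟩
  have hnR : (0:ℝ) < n := by positivity
  set W := ∑ j, w j with hWdef
  have hWpos : 0 < W := Finset.sum_pos (fun j _ => hw j) ⟨0, Finset.mem_univ _⟩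
  have hutil : ∀ S : Finset (Fin m), 0 ≤ util u i S :=
    fun S => Finset.sum_nonneg (fun g _ => hu i g)
  set f1 : (Fin n → Finset (Fin m)) → ℝ := fun Z => ⨅ j, util u i (Z j) with hf1
  set f2 : (Fin n → Finset (Fin m)) → ℝ := fun Z => ⨅ j, util u i (Z j) / w j with hf2
  set S1 : Set ℝ := {v | ∃ Z : Fin n → Finset (Fin m), IsAllocation Z ∧ v = f1 Z} with hS1
  set S2 : Set ℝ := {v | ∃ Z : Fin n → Finset (Fin m), IsAllocation Z ∧ v = f2 Z} with hS2
  have hS1fin : S1.Finite :=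
    (Set.finite_range f1).subset (by rintro v ⟨Z, _, rfl⟩; exact ⟨Z, rfl⟩)
  have hS2fin : S2.Finite :=
    (Set.finite_range f2).subset (by rintro v ⟨Z, _, rfl⟩; exact ⟨Z, rfl⟩)
  have hZ0 : ∃ Z : Fin n → Finset (Fin m), IsAllocation Z := by
    refine ⟨fun j => if j = 0 then Finset.univ else ∅, ?_, ?_⟩
    · intro a b hab
      by_cases ha : a = 0 <;> by_cases hb : b = 0 <;> simp_all
    · ext g
      simp only [Finset.mem_biUnion, Finset.mem_univ, iff_true]
      exact ⟨0, by simp, by simp⟩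
  obtain ⟨Z0, hZ0⟩ := hZ0
  have hS1ne : S1.Nonempty := ⟨f1 Z0, Z0, hZ0, rfl⟩
  have hmem : sSup S1 ∈ S1 := hS1ne.csSup_mem hS1fin
  obtain ⟨Z, hZalloc, hZeq⟩ := hmem
  have hf2mem : f2 Z ∈ S2 := ⟨Z, hZalloc, rfl⟩
  have hle2 : f2 Z ≤ sSup S2 := le_csSup hS2fin.bddAbove hf2mem
  have hkey : f1 Z / W ≤ f2 Z := by
    apply le_ciInf
    intro j
    have h1 : f1 Z ≤ util u i (Z j) := ciInf_le (Finite.bddBelow_range _) j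
    have h2 : w j ≤ W := Finset.single_le_sum (fun k _ => (hw k).le) (Finset.mem_univ j)
    calc f1 Z / W ≤ util u i (Z j) / W := by gcongr
      _ ≤ util u i (Z j) / w j := by
          gcongr
          exacts [hutil _, hw j]
  have hchain : w i * (f1 Z / W) ≤ util u i (A i) := by
    have : w i * (f1 Z / W) ≤ w i * sSup S2 := by
      apply mul_le_mul_of_nonneg_left (hkey.trans hle2) (hw i).le
    exact this.trans (hWMMS i)
  have hMMS : MMS u i = f1 Z := hZeq
  have : (1 / (n : ℝ)) * NMMS w u i = w i * (f1 Z / W) := by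
    rw [NMMS, hMMS, ← hWdef]
    field_simp
  rw [this]
  exact hchain
end

section
/- For every n ≥ 3 and every α > 0, there exists an instance with n agents and an allocation in it that is NMMS-fair (i.e., 1-NMMS) but not α-WMMS. -/
open Finset

/-- For n ≥ 3, NMMS-fairness does not imply any positive approximation of WMMS. -/
theorem nmms_no_approx_wmms (n : ℕ) (hn : 3 ≤ n) (α : ℝ) (hα : 0 < α) :
    ∃ (m : ℕ) (w : Fin n → ℝ) (u : Fin n → Fin m → ℝ) (A : Fin n → Finset (Fin m)),
      (∀ i, 0 < w i) ∧ (∀ i g, 0 ≤ u i g) ∧ IsAllocation A ∧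
      (∀ i, util u i (A i) ≥ NMMS w u i) ∧
      ¬ ∀ i, util u i (A i) ≥ α * WMMS w u i := by
  haveI : NeZero n := ⟨by omega⟩
  have hn0 : 0 < n := by omega
  haveI : Nonempty (Fin n) := ⟨0⟩
  have hnR : (3:ℝ) ≤ (n:ℝ) := by exact_mod_cast hn
  set T : ℝ := 2*n*n/α with hTdef
  have hT0 : 0 < T := by
    have : (0:ℝ) < (n:ℝ) := by linarith
    positivity
  have hαT : α * T = 2*n*n := by
    rw [hTdef]; field_simp
  set d : Fin (n+1) := ⟨n, Nat.lt_succ_self n⟩ with hd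
  set b : Fin (n+1) := ⟨n-1, by omega⟩ with hb
  set w : Fin n → ℝ := fun j => if j.val = n-1 then T else 1 with hw
  set u : Fin n → Fin (n+1) → ℝ := fun i g =>
    if i.val = 0 then (if g.val < n-1 then 1 else if g.val = n-1 then T else α/2) else 0 with hu
  set A : Fin n → Finset (Fin (n+1)) := fun i =>
    if i.val = 0 then {d} else if i.val = 1 then Finset.univ \ {d} else ∅ with hA
  have hu0 : ∀ i g, 0 ≤ u i g := by
    intro i g
    simp only [hu]
    split_ifs <;> linarith
  have hw0 : w 0 = 1 := by
    simp only [hw, Fin.val_zero]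
    have : ¬ (0 = n - 1) := by omega
    simp [this]
  have hwpos : ∀ i, 0 < w i := by
    intro i; simp only [hw]; split_ifs <;> linarith
  have hSumw : ∑ j, w j = T + ((n:ℝ) - 1) := by
    have key : ∀ j : Fin n, w j = (if j = (⟨n-1, by omega⟩ : Fin n) then T - 1 else 0) + 1 := by
      intro j
      simp only [hw, Fin.ext_iff]
      by_cases h : j.val = n - 1 <;> simp [h]
    rw [Finset.sum_congr rfl (fun j _ => key j), Finset.sum_add_distrib]
    rw [Finset.sum_ite_eq' Finset.univ (⟨n-1, by omega⟩ : Fin n) (fun _ => T - 1)]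
    simp [Finset.card_univ]
    ring
  have hAlloc : IsAllocation A := by
    constructor
    · intro i j hij
      simp only [hA]
      have hne : i.val ≠ j.val := fun h => hij (Fin.ext h)
      split_ifs <;> first
        | omega
        | simp [Finset.disjoint_left]
        | (simp [Finset.disjoint_right])
    · ext g
      simp only [Finset.mem_biUnion, Finset.mem_univ, iff_true, true_and]
      by_cases hg : g = d
      · exact ⟨0, by simp [hA, hg]⟩
      · refine ⟨⟨1, by omega⟩, ?_⟩
        have h1 : ¬ ((1:ℕ) = 0) := by omega
        simp [hA, h1, hg]
  have huA0 : util u 0 (A 0) = α/2 := by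
    have h0 : ((0:Fin n)).val = 0 := rfl
    simp only [hA, h0, if_pos rfl, util, Finset.sum_singleton, hu, hd]
    have h1 : ¬ (n < n-1) := by omega
    have h2 : ¬ (n = n-1) := by omega
    simp [h1, h2]
  -- MMS of agent 0 is at most n-1
  have hMMSle : MMS u 0 ≤ (n:ℝ) - 1 := by
    refine csSup_le ⟨_, ⟨A, hAlloc, rfl⟩⟩ ?_
    rintro v ⟨Z, hZ, rfl⟩
    obtain ⟨jb, hjb⟩ : ∃ j, b ∈ Z j := by
      have hmem : b ∈ Finset.univ.biUnion Z := by rw [hZ.2]; exact Finset.mem_univ b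
      obtain ⟨j, _, hj⟩ := Finset.mem_biUnion.mp hmem
      exact ⟨j, hj⟩
    obtain ⟨jd, hjd⟩ : ∃ j, d ∈ Z j := by
      have hmem : d ∈ Finset.univ.biUnion Z := by rw [hZ.2]; exact Finset.mem_univ d
      obtain ⟨j, _, hj⟩ := Finset.mem_biUnion.mp hmem
      exact ⟨j, hj⟩
    obtain ⟨j, hjmem⟩ : ∃ j : Fin n, j ∈ Finset.univ \ ({jb, jd} : Finset (Fin n)) := by
      apply Finset.Nonempty.exists_mem
      rw [← Finset.card_pos, Finset.card_sdiff_of_subset (Finset.subset_univ _), Finset.card_univ,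
        Fintype.card_fin]
      have : ({jb, jd} : Finset (Fin n)).card ≤ 2 :=
        le_trans (Finset.card_insert_le _ _) (by simp)
      omega
    rw [Finset.mem_sdiff, Finset.mem_insert, Finset.mem_singleton] at hjmem
    push_neg at hjmem
    have hbZ : b ∉ Z j := fun h =>
      (Finset.disjoint_left.mp (hZ.1 j jb hjmem.2.1) h) hjb
    have hdZ : d ∉ Z j := fun h =>
      (Finset.disjoint_left.mp (hZ.1 j jd hjmem.2.2) h) hjd
    have hsub : Z j ⊆ Finset.univ \ ({b, d} : Finset (Fin (n+1))) := by
      intro g hg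
      rw [Finset.mem_sdiff, Finset.mem_insert, Finset.mem_singleton]
      refine ⟨Finset.mem_univ g, ?_⟩
      rintro (rfl | rfl)
      · exact hbZ hg
      · exact hdZ hg
    calc (⨅ k, util u 0 (Z k)) ≤ util u 0 (Z j) :=
          ciInf_le (Set.Finite.bddBelow (Set.finite_range _)) j
      _ ≤ ∑ g ∈ Finset.univ \ ({b, d} : Finset (Fin (n+1))), u 0 g := by
          apply Finset.sum_le_sum_of_subset_of_nonneg hsub
          intro g _ _; exact hu0 0 g
      _ = (n:ℝ) - 1 := by
          have hval : ∀ g ∈ Finset.univ \ ({b, d} : Finset (Fin (n+1))), u 0 g = 1 := by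
            intro g hg
            rw [Finset.mem_sdiff, Finset.mem_insert, Finset.mem_singleton] at hg
            have hgb : g.val ≠ n - 1 := fun h => hg.2 (Or.inl (by rw [hb]; exact Fin.ext h))
            have hgd : g.val ≠ n := fun h => hg.2 (Or.inr (by rw [hd]; exact Fin.ext h))
            have hglt : g.val < n - 1 := by have := g.isLt; omega
            simp [hu, hglt]
          rw [Finset.sum_congr rfl hval, Finset.sum_const]
          have hbd : b ≠ d := by simp [hb, hd, Fin.ext_iff]; omega
          rw [Finset.card_sdiff_of_subset (Finset.subset_univ _), Finset.card_univ, Fintype.card_fin,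
            Finset.card_insert_of_notMem (by simp [hbd]), Finset.card_singleton]
          have : (n + 1 - 2 : ℕ) = n - 1 := by omega
          rw [this, nsmul_eq_mul, mul_one, Nat.cast_sub (by omega : 1 ≤ n), Nat.cast_one]
  -- MMS of other agents is 0
  have hMMSi : ∀ i : Fin n, i.val ≠ 0 → MMS u i = 0 := by
    intro i hi
    have hset : {v : ℝ | ∃ Z : Fin n → Finset (Fin (n+1)), IsAllocation Z ∧
        v = ⨅ j, util u i (Z j)} = {0} := by
      ext v
      simp only [Set.mem_setOf_eq, Set.mem_singleton_iff]
      constructor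
      · rintro ⟨Z, hZ, rfl⟩
        have hz : ∀ j, util u i (Z j) = 0 := by
          intro j; simp [util, hu, hi, show i ≠ 0 from fun h => hi (by simp [h])]
        simp [hz, ciInf_const]
      · rintro rfl
        exact ⟨A, hAlloc, by simp [util, hu, hi, ciInf_const, show i ≠ 0 from fun h => hi (by simp [h])]⟩
    rw [MMS, hset, csSup_singleton]
  -- The balanced partition for WMMS lower bound
  set Z : Fin n → Finset (Fin (n+1)) := fun j =>
    if j.val = n-1 then ({b, d} : Finset (Fin (n+1))) else {⟨j.val, by omega⟩} with hZdef
  have hZalloc : IsAllocation Z := by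
    constructor
    · intro i j hij
      have hne : i.val ≠ j.val := fun h => hij (Fin.ext h)
      simp only [hZdef]
      split_ifs with h1 h2 h2
      · omega
      · have : j.val < n - 1 := by have := j.isLt; omega
        simp [Finset.disjoint_right, hb, hd, Fin.ext_iff]
        omega
      · have : i.val < n - 1 := by have := i.isLt; omega
        simp [Finset.disjoint_left, hb, hd, Fin.ext_iff]
        omega
      · simp [Finset.disjoint_left, Fin.ext_iff]
        omega
    · ext g
      simp only [Finset.mem_biUnion, Finset.mem_univ, iff_true, true_and]
      by_cases hg : g.val < n - 1
      · refine ⟨⟨g.val, by omega⟩, ?_⟩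
        have : ¬ (g.val = n - 1) := by omega
        simp [hZdef, this, Fin.ext_iff]
      · refine ⟨⟨n-1, by omega⟩, ?_⟩
        have hgv : g.val = n - 1 ∨ g.val = n := by have := g.isLt; omega
        simp only [hZdef, if_pos rfl, Finset.mem_insert, Finset.mem_singleton, hb, hd,
          Fin.ext_iff]
        rcases hgv with h | h
        · exact Or.inl h
        · exact Or.inr h
  have hbd : b ≠ d := by simp [hb, hd, Fin.ext_iff]; omega
  have hZval : (⨅ j, util u 0 (Z j) / w j) = 1 := by
    have hge : ∀ j : Fin n, (1:ℝ) ≤ util u 0 (Z j) / w j := by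
      intro j
      by_cases h : j.val = n - 1
      · have hub : util u 0 (Z j) = T + α/2 := by
          simp only [hZdef, if_pos h, util]
          rw [Finset.sum_pair hbd]
          have h1 : ¬ (n - 1 < n - 1) := by omega
          have h2 : ¬ (n < n - 1) := by omega
          have h3 : ¬ (n = n - 1) := by omega
          simp [hu, hb, hd, h1, h2, h3]
        have hwj : w j = T := by simp [hw, h]
        rw [hub, hwj, le_div_iff₀ hT0]
        linarith
      · have hlt : j.val < n - 1 := by have := j.isLt; omega
        have hub : util u 0 (Z j) = 1 := by
          simp only [hZdef, if_neg h, util, Finset.sum_singleton]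
          simp [hu, hlt]
        have hwj : w j = 1 := by simp [hw, h]
        rw [hub, hwj, div_one]
    have h0v : ((0:Fin n)).val = 0 := rfl
    apply le_antisymm
    · calc (⨅ j, util u 0 (Z j) / w j) ≤ util u 0 (Z 0) / w 0 :=
            ciInf_le (Set.Finite.bddBelow (Set.finite_range _)) 0
        _ = 1 := by
            have h : ¬ ((0:Fin n).val = n - 1) := by rw [h0v]; omega
            have hlt : (0:Fin n).val < n - 1 := by rw [h0v]; omega
            have hlt' : 0 < n - 1 := by omega
            have hub : util u 0 (Z 0) = 1 := by
              simp only [hZdef, if_neg h, util, Finset.sum_singleton]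
              simp [hu, hlt']
            rw [hub, hw0, div_one]
    · exact le_ciInf hge
  have hWMMS : 1 ≤ WMMS w u 0 := by
    rw [WMMS, hw0, one_mul]
    apply le_csSup
    · refine ⟨util u 0 Finset.univ, ?_⟩
      rintro v ⟨Y, hY, rfl⟩
      calc (⨅ j, util u 0 (Y j) / w j) ≤ util u 0 (Y 0) / w 0 :=
            ciInf_le (Set.Finite.bddBelow (Set.finite_range _)) 0
        _ = util u 0 (Y 0) := by rw [hw0, div_one]
        _ ≤ util u 0 Finset.univ := by
            apply Finset.sum_le_sum_of_subset_of_nonneg (Finset.subset_univ _)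
            intro g _ _; exact hu0 0 g
    · exact ⟨Z, hZalloc, hZval.symm⟩
  refine ⟨n+1, w, u, A, hwpos, hu0, hAlloc, ?_, ?_⟩
  · intro i
    by_cases hi : i.val = 0
    · have hi0 : i = 0 := Fin.ext hi
      subst hi0
      rw [huA0, NMMS, hw0, hSumw]
      have hc : (0:ℝ) < T + ((n:ℝ) - 1) := by linarith
      have step1 : 1 / (T + ((n:ℝ)-1)) * (n:ℝ) * MMS u 0 ≤
          1 / (T + ((n:ℝ)-1)) * (n:ℝ) * ((n:ℝ) - 1) := by
        apply mul_le_mul_of_nonneg_left hMMSle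
        positivity
      have step2 : 1 / (T + ((n:ℝ)-1)) * (n:ℝ) * ((n:ℝ) - 1) ≤ α/2 := by
        rw [div_mul_eq_mul_div, div_mul_eq_mul_div, div_le_iff₀ hc]
        nlinarith [hαT]
      linarith
    · have hz : util u i (A i) = 0 := by simp [util, hu, hi, show i ≠ 0 from fun h => hi (by simp [h])]
      rw [hz, NMMS, hMMSi i hi]
      simp
  · intro hall
    have h0 := hall 0
    rw [huA0] at h0
    have : α * 1 ≤ α * WMMS w u 0 := mul_le_mul_of_nonneg_left hWMMS hα.le
    linarith
end

section
/- For every x ∈ [0,1], every y ∈ (0,1], and every α > 0, there exists an instance in which all agents have the same utility function, together with an allocation that satisfies WEF(x,y) but is not α-NMMS. -/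
open Finset

/-- For x ∈ [0,1], y ∈ (0,1], α > 0, WEF(x,y) does not imply α-NMMS,
even with identical valuations. -/
theorem wef_no_approx_nmms (x y α : ℝ)
    (hx : x ∈ Set.Icc (0 : ℝ) 1) (hy : y ∈ Set.Ioc (0 : ℝ) 1) (hα : 0 < α) :
    ∃ (n m : ℕ) (w : Fin n → ℝ) (u : Fin n → Fin m → ℝ) (A : Fin n → Finset (Fin m)),
      2 ≤ n ∧ (∀ i, 0 < w i) ∧ (∀ i g, 0 ≤ u i g) ∧
      (∀ i j : Fin n, u i = u j) ∧ IsAllocation A ∧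
      WEF w u A x y ∧ ¬ ∀ i, util u i (A i) ≥ α * NMMS w u i := by
  obtain ⟨hx0, hx1⟩ := hx
  obtain ⟨hy0, hy1⟩ := hy
  have hw0 : (0:ℝ) < y/2 := by positivity
  refine ⟨2, 2, ![1, y/2], fun _ _ => 1, ![Finset.univ, ∅], le_refl 2, ?_, ?_, ?_, ?_, ?_, ?_⟩
  · intro i
    fin_cases i <;> simp <;> positivity
  · intro i g; norm_num
  · intro i j; rfl
  · constructor
    · intro i j hij
      fin_cases i <;> fin_cases j <;> simp_all
    · decide
  · -- WEF
    intro i j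
    fin_cases i <;> fin_cases j
    · refine ⟨∅, by simp, by simp, ?_⟩
      simp [util]
    · refine ⟨∅, by simp, by simp, ?_⟩
      simp only [Fin.mk_zero, Fin.mk_one, Fin.isValue, Matrix.cons_val_one, Matrix.head_cons, Matrix.cons_val_zero]
      have : util (fun _ _ => (1:ℝ)) (0 : Fin 2) (∅ : Finset (Fin 2)) = 0 := by simp [util]
      rw [this]
      have h2 : util (fun _ _ => (1:ℝ)) (0 : Fin 2) (Finset.univ : Finset (Fin 2)) = 2 := by
        simp [util]
      rw [h2]
      rw [ge_iff_le, div_le_div_iff₀ hw0 (by norm_num)]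
      nlinarith
    · refine ⟨{0}, by simp, by simp, ?_⟩
      simp only [Fin.mk_zero, Fin.mk_one, Fin.isValue, Matrix.cons_val_one, Matrix.head_cons, Matrix.cons_val_zero]
      have h0 : util (fun _ _ => (1:ℝ)) (1 : Fin 2) (∅ : Finset (Fin 2)) = 0 := by simp [util]
      have h1 : util (fun _ _ => (1:ℝ)) (1 : Fin 2) ({0} : Finset (Fin 2)) = 1 := by simp [util]
      have h2 : util (fun _ _ => (1:ℝ)) (1 : Fin 2) (Finset.univ : Finset (Fin 2)) = 2 := by
        simp [util]
      rw [h0, h1, h2]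
      rw [ge_iff_le, div_le_div_iff₀ (by norm_num) hw0]
      nlinarith
    · refine ⟨∅, by simp, by simp, ?_⟩
      simp [util]
  · -- not alpha-NMMS
    intro h
    set u : Fin 2 → Fin 2 → ℝ := fun _ _ => 1 with hu
    have hmms : (1:ℝ) ≤ MMS u 1 := by
      have hZ : IsAllocation (![{0}, {1}] : Fin 2 → Finset (Fin 2)) := by
        constructor
        · intro i j hij; fin_cases i <;> fin_cases j <;> simp_all
        · decide
      have hval : ∀ j : Fin 2, util u 1 ((![{0}, {1}] : Fin 2 → Finset (Fin 2)) j) = 1 := by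
        intro j; fin_cases j <;> simp [util, hu]
      have hmem : (1:ℝ) ∈ {v : ℝ | ∃ Z : Fin 2 → Finset (Fin 2), IsAllocation Z ∧
          v = ⨅ j, util u 1 (Z j)} := by
        refine ⟨![{0}, {1}], hZ, ?_⟩
        simp [hval]
      have hbdd : BddAbove {v : ℝ | ∃ Z : Fin 2 → Finset (Fin 2), IsAllocation Z ∧
          v = ⨅ j, util u 1 (Z j)} := by
        refine ⟨2, ?_⟩
        rintro v ⟨Z, hZ, rfl⟩
        have h1 : (⨅ j, util u 1 (Z j)) ≤ util u 1 (Z 0) := by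
          apply ciInf_le
          exact (Set.finite_range _).bddBelow
        have h2 : util u 1 (Z 0) ≤ 2 := by
          have hc : util u 1 (Z 0) = ((Z 0).card : ℝ) := by simp [util, hu]
          have hle : (Z 0).card ≤ 2 := by
            have := Finset.card_le_card (Finset.subset_univ (Z 0))
            simpa using this
          rw [hc]
          exact_mod_cast le_trans hle (le_refl 2)
        exact le_trans h1 h2
      unfold MMS
      exact le_csSup hbdd hmem
    have h1 := h 1
    have hA1 : util u 1 ((![Finset.univ, ∅] : Fin 2 → Finset (Fin 2)) 1) = 0 := by
      simp [util]
    have hsum : (∑ j, (![1, y/2] : Fin 2 → ℝ) j) = 1 + y/2 := by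
      simp [Fin.sum_univ_two]
    have hNpos : 0 < NMMS ![1, y/2] u 1 := by
      unfold NMMS
      rw [hsum]
      have hw1 : (![1, y/2] : Fin 2 → ℝ) 1 = y/2 := rfl
      rw [hw1]
      have hp : (0:ℝ) < (y/2/(1+y/2)) := by positivity
      nlinarith
    rw [hA1] at h1
    nlinarith
end

section
/- For every x ∈ [0,1] and every α > 0, there exists an instance and an allocation in it that satisfies WEF(x, 1−x) but is not α-WMMS. -/
open Finset

/-- For x ∈ [0,1] and α > 0, WEF(x,1−x) does not imply α-WMMS. -/
theorem wef_no_approx_wmms (x α : ℝ) (hx : x ∈ Set.Icc (0 : ℝ) 1) (hα : 0 < α) :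
    ∃ (n m : ℕ) (w : Fin n → ℝ) (u : Fin n → Fin m → ℝ) (A : Fin n → Finset (Fin m)),
      2 ≤ n ∧ (∀ i, 0 < w i) ∧ (∀ i g, 0 ≤ u i g) ∧ IsAllocation A ∧
      WEF w u A x (1 - x) ∧ ¬ ∀ i, util u i (A i) ≥ α * WMMS w u i := by
  obtain ⟨hx0, hx1⟩ := hx
  obtain ⟨W, hW1, hWα⟩ : ∃ W : ℕ, 1 ≤ W ∧ 1 < α * W := by
    refine ⟨⌈1/α⌉₊ + 1, Nat.le_add_left 1 _, ?_⟩
    have h1 : (1:ℝ)/α ≤ (⌈1/α⌉₊ : ℝ) := Nat.le_ceil _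
    have h2 : (1:ℝ)/α < ((⌈1/α⌉₊ + 1 : ℕ) : ℝ) := by push_cast; linarith
    calc (1:ℝ) = α * (1/α) := by field_simp
    _ < α * _ := mul_lt_mul_of_pos_left h2 hα
  have hWR : (1:ℝ) ≤ (W:ℝ) := by exact_mod_cast hW1
  have hWpos : (0:ℝ) < (W:ℝ) := by linarith
  set z : Fin (W+2) := ⟨0, by omega⟩ with hz
  set b : Fin (W+2) := ⟨W+1, by omega⟩ with hb
  have hzb : z ≠ b := by simp [hz, hb, Fin.ext_iff]
  set w : Fin 2 → ℝ := ![1, (W:ℝ)] with hw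
  set u : Fin 2 → Fin (W+2) → ℝ :=
    fun i g => if i = 0 then (1 + if g = b then (W:ℝ)^2 - 1 else 0) else 0 with hu
  set A : Fin 2 → Finset (Fin (W+2)) := ![{z}, univ \ {z}] with hA
  have hc : (0:ℝ) ≤ (W:ℝ)^2 - 1 := by nlinarith
  have hutil0 : ∀ S : Finset (Fin (W+2)),
      util u 0 S = S.card + (if b ∈ S then (W:ℝ)^2 - 1 else 0) := by
    intro S
    simp only [util, hu, if_pos rfl]
    rw [Finset.sum_add_distrib, Finset.sum_ite_eq' S b (fun _ => (W:ℝ)^2-1)]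
    simp
  have hutil1 : ∀ S : Finset (Fin (W+2)), util u 1 S = 0 := by
    intro S; simp [util, hu]
  have hA0 : util u 0 (A 0) = 1 := by
    rw [hutil0]
    simp [hA, hzb, Ne.symm hzb]
  have hcardA1 : (univ \ {z} : Finset (Fin (W+2))).card = W + 1 := by
    rw [Finset.card_sdiff_of_subset (by simp)]
    simp
  have hA1 : util u 0 (A 1) = (W:ℝ)^2 + W := by
    rw [hutil0]
    have hbmem : b ∈ (univ \ {z} : Finset (Fin (W+2))) := by simp [Ne.symm hzb]
    simp [hA, hbmem, hcardA1]
    push_cast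
    ring
  have hB : util u 0 ({b} : Finset (Fin (W+2))) = (W:ℝ)^2 := by
    rw [hutil0]; simp
  refine ⟨2, W+2, w, u, A, le_refl 2, ?_, ?_, ?_, ?_, ?_⟩
  · intro i
    fin_cases i <;> simp [hw] <;> positivity
  · intro i g
    fin_cases i <;> simp [hu] <;> positivity
  · constructor
    · intro i j hij
      fin_cases i <;> fin_cases j <;> simp_all [hA] <;>
        first
        | exact Finset.disjoint_sdiff
        | exact Finset.sdiff_disjoint
    · ext g
      simp [hA, Fin.exists_fin_two]
      tauto
  · intro i j
    fin_cases i <;> fin_cases j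
    · exact ⟨∅, by simp, by simp, by simp [util]⟩
    · refine ⟨{b}, by simp [hA, Ne.symm hzb], by simp, ?_⟩
      show (util u 0 (A 0) + (1-x) * util u 0 {b}) / w 0 ≥ (util u 0 (A 1) - x * util u 0 {b}) / w 1
      rw [hA0, hA1, hB]
      have hw0 : w 0 = 1 := rfl
      have hw1 : w 1 = (W:ℝ) := rfl
      rw [hw0, hw1, ge_iff_le, div_le_div_iff₀ hWpos one_pos]
      nlinarith [mul_nonneg (sub_nonneg.2 hx1) (sub_nonneg.2 hWR)]
    · exact ⟨∅, by simp, by simp, by simp [hutil1]⟩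
    · exact ⟨∅, by simp, by simp, by simp [hutil1]⟩
  · intro hall
    have h0 := hall 0
    rw [hA0] at h0
    set Z : Fin 2 → Finset (Fin (W+2)) := ![univ \ {z, b}, {z, b}] with hZdef
    have hZ : IsAllocation Z := by
      constructor
      · intro i j hij
        fin_cases i <;> fin_cases j <;> simp_all [hZdef] <;>
          first
          | exact Finset.sdiff_disjoint
          | exact Finset.disjoint_sdiff
      · ext g
        simp [hZdef, Fin.exists_fin_two]
        tauto
    have hZ0 : util u 0 (Z 0) = (W:ℝ) := by
      rw [hutil0]
      have hcard : (univ \ {z, b} : Finset (Fin (W+2))).card = W := by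
        rw [Finset.card_sdiff_of_subset (by simp)]
        rw [Finset.card_insert_of_notMem (by simp [hzb])]
        simp
      simp [hZdef, hcard]
    have hZ1 : util u 0 (Z 1) = (W:ℝ)^2 + 1 := by
      rw [hutil0]
      have hcard : ({z, b} : Finset (Fin (W+2))).card = 2 := by
        rw [Finset.card_insert_of_notMem (by simp [hzb])]; simp
      simp [hZdef, hcard]
      ring
    have hval : (W:ℝ) ≤ ⨅ j, util u 0 (Z j) / w j := by
      apply le_ciInf
      intro j
      fin_cases j
      · show (W:ℝ) ≤ util u 0 (Z 0) / w 0
        rw [hZ0]; simp [hw]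
      · show (W:ℝ) ≤ util u 0 (Z 1) / w 1
        rw [hZ1]
        have hw1 : w 1 = (W:ℝ) := rfl
        rw [hw1, le_div_iff₀ hWpos]
        nlinarith
    have hbdd : BddAbove {v : ℝ | ∃ Y : Fin 2 → Finset (Fin (W+2)), IsAllocation Y ∧
        v = ⨅ j, util u 0 (Y j) / w j} := by
      apply Set.Finite.bddAbove
      apply Set.Finite.subset (Set.finite_range
        (fun Y : Fin 2 → Finset (Fin (W+2)) => ⨅ j, util u 0 (Y j) / w j))
      rintro v ⟨Y, _, rfl⟩
      exact ⟨Y, rfl⟩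
    have hsup : (W:ℝ) ≤ WMMS w u 0 := by
      have hmem : (⨅ j, util u 0 (Z j) / w j) ∈ {v : ℝ | ∃ Y : Fin 2 → Finset (Fin (W+2)),
          IsAllocation Y ∧ v = ⨅ j, util u 0 (Y j) / w j} := ⟨Z, hZ, rfl⟩
      have := le_csSup hbdd hmem
      have hw0 : w 0 = 1 := rfl
      unfold WMMS
      rw [hw0, one_mul]
      linarith
    have : α * (W:ℝ) ≤ α * WMMS w u 0 := mul_le_mul_of_nonneg_left hsup hα.le
    linarith
end

section
/- In an instance in which all items are identical, every allocation satisfying WEF(1,0) satisfies upper quota, i.e., |A_i| ≤ ⌈q_i⌉ for every agent i. -/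
open Finset

/-- With identical items, every WEF(1,0) allocation satisfies upper quota. -/
theorem wef10_upper_quota (n m : ℕ) (hn : 2 ≤ n)
    (w : Fin n → ℝ) (hw : ∀ i, 0 < w i)
    (A : Fin n → Finset (Fin m)) (hA : IsAllocation A)
    (hWEF : WEF w (fun _ _ => (1 : ℝ)) A 1 0) :
    ∀ i : Fin n, ((A i).card : ℤ) ≤ ⌈(w i / ∑ j, w j) * (m : ℝ)⌉ := by
  obtain ⟨hdisj, hcover⟩ := hA
  intro i
  have hne : (Finset.univ : Finset (Fin n)).Nonempty := ⟨i, mem_univ i⟩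
  have hWpos : 0 < ∑ j, w j := Finset.sum_pos (fun j _ => hw j) hne
  have hsum : ∑ j, ((A j).card : ℝ) = m := by
    have h1 : (Finset.univ.biUnion A).card = ∑ j, (A j).card :=
      Finset.card_biUnion (fun a _ b _ hab => hdisj a b hab)
    rw [hcover, Finset.card_univ, Fintype.card_fin] at h1
    exact_mod_cast h1.symm
  have key : ∀ j, (((A i).card : ℝ) - 1) * w j ≤ ((A j).card : ℝ) * w i := by
    intro j
    obtain ⟨B, hBsub, hBcard, hineq⟩ := hWEF j i
    simp only [util, Finset.sum_const, nsmul_eq_mul, mul_one, zero_mul, add_zero,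
      one_mul] at hineq
    have hB1 : (B.card : ℝ) ≤ 1 := by exact_mod_cast hBcard
    have h2 := (div_le_div_iff₀ (hw i) (hw j)).mp hineq
    nlinarith [hw j]
  have hkey2 : ∑ j ∈ Finset.univ.erase i, (((A i).card : ℝ) - 1) * w j ≤
      ∑ j ∈ Finset.univ.erase i, ((A j).card : ℝ) * w i :=
    Finset.sum_le_sum (fun j _ => key j)
  rw [← Finset.mul_sum, ← Finset.sum_mul,
    Finset.sum_erase_eq_sub (mem_univ i), Finset.sum_erase_eq_sub (mem_univ i),
    hsum] at hkey2
  have hlt : ((A i).card : ℝ) - 1 < w i / (∑ j, w j) * m := by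
    rw [div_mul_eq_mul_div, lt_div_iff₀ hWpos]
    nlinarith [hw i]
  have : ((A i).card : ℤ) - 1 < ⌈(w i / ∑ j, w j) * (m : ℝ)⌉ := by
    rw [Int.lt_ceil]
    push_cast
    linarith
  omega
end

section
/- In an instance in which all items are identical, every allocation satisfying WEF(0,1) satisfies lower quota, i.e., |A_i| ≥ ⌊q_i⌋ for every agent i. -/
open Finset

/-- With identical items, every WEF(0,1) allocation satisfies lower quota. -/
theorem wef01_lower_quota (n m : ℕ) (hn : 2 ≤ n)
    (w : Fin n → ℝ) (hw : ∀ i, 0 < w i)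
    (A : Fin n → Finset (Fin m)) (hA : IsAllocation A)
    (hWEF : WEF w (fun _ _ => (1 : ℝ)) A 0 1) :
    ∀ i : Fin n, ⌊(w i / ∑ j, w j) * (m : ℝ)⌋ ≤ ((A i).card : ℤ) := by
  intro i
  by_contra h
  push_neg at h
  set W := ∑ j, w j with hWdef
  have hW : 0 < W := Finset.sum_pos (fun j _ => hw j) ⟨i, Finset.mem_univ i⟩
  -- floor bound gives (card + 1) ≤ (w i / W) * m
  have hq : (((A i).card : ℝ) + 1) ≤ (w i / W) * m := by
    have h1 : ((A i).card : ℤ) + 1 ≤ ⌊(w i / W) * (m : ℝ)⌋ := h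
    have h2 := Int.le_floor.mp h1
    push_cast at h2
    exact h2
  -- key per-agent bound
  have key : ∀ j, ((A j).card : ℝ) * w i ≤ (((A i).card : ℝ) + 1) * w j := by
    intro j
    obtain ⟨B, hBsub, hBcard, hineq⟩ := hWEF i j
    simp only [util, Finset.sum_const, nsmul_eq_mul, mul_one, zero_mul, sub_zero,
      one_mul, ge_iff_le] at hineq
    have hB1 : (B.card : ℝ) ≤ 1 := by exact_mod_cast hBcard
    have h3 : ((A j).card : ℝ) / w j ≤ (((A i).card : ℝ) + 1) / w i := by
      refine le_trans hineq ?_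
      gcongr
      exact (hw i).le
    have := (div_le_div_iff₀ (hw j) (hw i)).mp h3
    linarith
  -- total number of items
  have hm : (m : ℝ) = ∑ j, ((A j).card : ℝ) := by
    have hcb : (Finset.univ.biUnion A).card = ∑ j, (A j).card :=
      Finset.card_biUnion (fun x _ y _ hxy => hA.1 x y hxy)
    rw [hA.2, Finset.card_univ, Fintype.card_fin] at hcb
    exact_mod_cast hcb
  -- split sum at i
  have hsplit : (m : ℝ) = ((A i).card : ℝ) + ∑ j ∈ Finset.univ.erase i, ((A j).card : ℝ) := by
    rw [hm, ← Finset.add_sum_erase _ _ (Finset.mem_univ i)]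
  have hWsplit : W = w i + ∑ j ∈ Finset.univ.erase i, w j := by
    rw [hWdef, ← Finset.add_sum_erase _ _ (Finset.mem_univ i)]
  have hsum : (∑ j ∈ Finset.univ.erase i, ((A j).card : ℝ)) * w i ≤
      (((A i).card : ℝ) + 1) * ∑ j ∈ Finset.univ.erase i, w j := by
    rw [Finset.sum_mul, Finset.mul_sum]
    exact Finset.sum_le_sum (fun j _ => key j)
  have hq' : (((A i).card : ℝ) + 1) * W ≤ w i * m := by
    have := mul_le_mul_of_nonneg_right hq hW.le
    calc (((A i).card : ℝ) + 1) * W ≤ (w i / W) * m * W := this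
      _ = w i * m := by field_simp
  nlinarith [hw i, hsum, hq', hsplit, hWsplit]
end

section
/- In an instance in which all items are identical, every weighted egalitarian (WEG) allocation satisfies both lower quota and upper quota, i.e., ⌊q_i⌋ ≤ |A_i| ≤ ⌈q_i⌉ for every agent i. -/
open Finset

/-- For identical items: the vector of differences between the fraction of items
received and the weight share. -/
noncomputable def dvec {n m : ℕ} (w : Fin n → ℝ) (A : Fin n → Finset (Fin m)) :
    Fin n → ℝ :=
  fun i => ((A i).card : ℝ) / (m : ℝ) - w i / ∑ j, w j

/-- A weighted egalitarian (WEG) allocation: leximin-optimal for `dvec`, i.e., its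
nondecreasingly sorted difference vector is lexicographically maximal. -/
noncomputable def IsWEG {n m : ℕ} (w : Fin n → ℝ) (A : Fin n → Finset (Fin m)) : Prop :=
  IsAllocation A ∧
    ∀ A' : Fin n → Finset (Fin m), IsAllocation A' →
      toLex (dvec w A' ∘ Tuple.sort (dvec w A')) ≤ toLex (dvec w A ∘ Tuple.sort (dvec w A))

lemma transfer {n m : ℕ} (A : Fin n → Finset (Fin m)) (hA : IsAllocation A)
    (a b : Fin n) (hab : a ≠ b) (g : Fin m) (hg : g ∈ A b) :
    ∃ A' : Fin n → Finset (Fin m), IsAllocation A' ∧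
      (A' a).card = (A a).card + 1 ∧ (A' b).card + 1 = (A b).card ∧
      ∀ k, k ≠ a → k ≠ b → A' k = A k := by
  classical
  set A' : Fin n → Finset (Fin m) :=
    fun k => if k = a then insert g (A a) else if k = b then (A b).erase g else A k with hA'def
  have hA'a : A' a = insert g (A a) := by simp [hA'def]
  have hA'b : A' b = (A b).erase g := by simp [hA'def, hab.symm]
  have hA'k : ∀ k, k ≠ a → k ≠ b → A' k = A k := by
    intro k hka hkb; simp [hA'def, hka, hkb]
  have hga : g ∉ A a := Finset.disjoint_right.mp (hA.1 a b hab) hg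
  have hgk : ∀ k, k ≠ b → g ∉ A k := by
    intro k hk
    exact Finset.disjoint_right.mp (hA.1 k b hk) hg
  have hmem : ∀ k x, x ∈ A' k ↔ (x ∈ A k ∧ ¬(k = b ∧ x = g)) ∨ (k = a ∧ x = g) := by
    intro k x
    by_cases hka : k = a
    · rw [hka, hA'a]
      simp only [Finset.mem_insert]
      have : ¬ (a = b) := hab
      constructor
      · rintro (h | h)
        · exact Or.inr ⟨trivial, h⟩
        · exact Or.inl ⟨h, fun hc => this hc.1⟩
      · rintro (⟨h, -⟩ | ⟨-, h⟩)
        · exact Or.inr h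
        · exact Or.inl h
    · by_cases hkb : k = b
      · rw [hkb, hA'b]
        simp only [Finset.mem_erase]
        constructor
        · rintro ⟨hne, h⟩
          exact Or.inl ⟨h, fun hc => hne hc.2⟩
        · rintro (⟨h, hne⟩ | ⟨hka', -⟩)
          · exact ⟨fun hxg => hne ⟨trivial, hxg⟩, h⟩
          · exact absurd hka' (fun hba => hab hba.symm)
      · rw [hA'k k hka hkb]
        constructor
        · intro h
          exact Or.inl ⟨h, fun hc => hkb hc.1⟩
        · rintro (⟨h, -⟩ | ⟨hka', -⟩)
          · exact h
          · exact absurd hka' hka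
  refine ⟨A', ⟨?_, ?_⟩, ?_, ?_, hA'k⟩
  · -- pairwise disjoint
    intro i j hij
    rw [Finset.disjoint_left]
    intro x hxi hxj
    rw [hmem i x] at hxi
    rw [hmem j x] at hxj
    rcases hxi with ⟨hxi, hi2⟩ | ⟨hia, hxg⟩
    · rcases hxj with ⟨hxj, hj2⟩ | ⟨hja, hxg⟩
      · exact Finset.disjoint_left.mp (hA.1 i j hij) hxi hxj
      · by_cases hib : i = b
        · exact hi2 ⟨hib, hxg⟩
        · exact hgk i hib (hxg ▸ hxi)
    · rcases hxj with ⟨hxj, hj2⟩ | ⟨hja, hxg2⟩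
      · by_cases hjb : j = b
        · exact hj2 ⟨hjb, hxg⟩
        · exact hgk j hjb (hxg ▸ hxj)
      · exact hij (hia.trans hja.symm)
  · -- cover
    ext x
    simp only [Finset.mem_biUnion, Finset.mem_univ, true_and, iff_true]
    have hx : ∃ k, x ∈ A k := by
      have : x ∈ Finset.univ.biUnion A := by rw [hA.2]; exact Finset.mem_univ x
      simpa using this
    obtain ⟨k, hk⟩ := hx
    by_cases hxg : k = b ∧ x = g
    · exact ⟨a, (hmem a x).mpr (Or.inr ⟨rfl, hxg.2⟩)⟩
    · exact ⟨k, (hmem k x).mpr (Or.inl ⟨hk, hxg⟩)⟩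
  · rw [hA'a, Finset.card_insert_of_notMem hga]
  · rw [hA'b, Finset.card_erase_of_mem hg]
    have : 0 < (A b).card := Finset.card_pos.mpr ⟨g, hg⟩
    omega


lemma card_filter_comp {n : ℕ} (σ : Equiv.Perm (Fin n)) (f : Fin n → ℝ) (t : ℝ) :
    ((univ : Finset (Fin n)).filter fun i => f (σ i) ≤ t).card
      = ((univ : Finset (Fin n)).filter fun i => f i ≤ t).card := by
  apply Finset.card_bij (fun i _ => σ i)
  · intro a ha; simpa using (Finset.mem_filter.mp ha).2
  · intro a _ b _ h; exact σ.injective h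
  · intro b hb
    exact ⟨σ.symm b, by simpa using (Finset.mem_filter.mp hb).2, by simp⟩

lemma lex_improve {n : ℕ} (f f' : Fin n → ℝ) (a b : Fin n) (hab : a ≠ b)
    (hsame : ∀ k, k ≠ a → k ≠ b → f' k = f k)
    (h1 : f a < f' a) (h2 : f a < f' b) (h3 : f' a < f b) (h4 : f' b < f b) :
    toLex (f ∘ Tuple.sort f) < toLex (f' ∘ Tuple.sort f') := by
  classical
  set s : Fin n → ℝ := f ∘ Tuple.sort f with hs_def
  set s' : Fin n → ℝ := f' ∘ Tuple.sort f' with hs'_def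
  have hs : Monotone s := Tuple.monotone_sort f
  have hs' : Monotone s' := Tuple.monotone_sort f'
  -- counting functions
  have hcs : ∀ t : ℝ, ((univ : Finset (Fin n)).filter fun i => s i ≤ t).card
      = ((univ : Finset (Fin n)).filter fun i => f i ≤ t).card := fun t =>
    card_filter_comp (Tuple.sort f) f t
  have hcs' : ∀ t : ℝ, ((univ : Finset (Fin n)).filter fun i => s' i ≤ t).card
      = ((univ : Finset (Fin n)).filter fun i => f' i ≤ t).card := fun t =>
    card_filter_comp (Tuple.sort f') f' t
  -- F1 : at threshold x = f a
  have hF1 : ((univ : Finset (Fin n)).filter fun i => f' i ≤ f a).card + 1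
      = ((univ : Finset (Fin n)).filter fun i => f i ≤ f a).card := by
    have hset : ((univ : Finset (Fin n)).filter fun i => f' i ≤ f a)
        = ((univ : Finset (Fin n)).filter fun i => f i ≤ f a).erase a := by
      ext i
      simp only [Finset.mem_filter, Finset.mem_univ, true_and, Finset.mem_erase]
      by_cases hia : i = a
      · subst hia
        simp only [not_le.mpr h1, false_iff, not_and]
        intro h; exact absurd rfl h
      · by_cases hib : i = b
        · subst hib
          constructor
          · intro h; exact absurd h (not_le.mpr h2)
          · rintro ⟨-, h⟩; exact absurd h (not_le.mpr (h1.trans h3))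
        · rw [hsame i hia hib]
          simp [hia]
    rw [hset, Finset.card_erase_of_mem (by simp)]
    have hmem : a ∈ (univ : Finset (Fin n)).filter fun i => f i ≤ f a := by simp
    have : 0 < ((univ : Finset (Fin n)).filter fun i => f i ≤ f a).card :=
      Finset.card_pos.mpr ⟨a, hmem⟩
    omega
  -- F2 : general upper bound
  have hF2 : ∀ t : ℝ, ((univ : Finset (Fin n)).filter fun i => f' i ≤ t).card
      ≤ ((univ : Finset (Fin n)).filter fun i => f i ≤ t).card + 1 := by
    intro t
    have hsub : ((univ : Finset (Fin n)).filter fun i => f' i ≤ t)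
        ⊆ insert b ((univ : Finset (Fin n)).filter fun i => f i ≤ t) := by
      intro i hi
      simp only [Finset.mem_filter, Finset.mem_univ, true_and] at hi
      by_cases hib : i = b
      · simp [hib]
      · by_cases hia : i = a
        · subst hia
          exact Finset.mem_insert_of_mem (by simp [le_of_lt (lt_of_lt_of_le h1 hi)])
        · rw [hsame i hia hib] at hi
          exact Finset.mem_insert_of_mem (by simp [hi])
    calc ((univ : Finset (Fin n)).filter fun i => f' i ≤ t).card
        ≤ (insert b ((univ : Finset (Fin n)).filter fun i => f i ≤ t)).card :=
          Finset.card_le_card hsub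
      _ ≤ _ := Finset.card_insert_le _ _
  -- F3 : if f a > t then counts are equal
  have hF3 : ∀ t : ℝ, ¬ (f a ≤ t) →
      ((univ : Finset (Fin n)).filter fun i => f' i ≤ t)
        = ((univ : Finset (Fin n)).filter fun i => f i ≤ t) := by
    intro t ht
    ext i
    simp only [Finset.mem_filter, Finset.mem_univ, true_and]
    by_cases hia : i = a
    · subst hia
      constructor
      · intro h; exact absurd (le_of_lt (lt_of_lt_of_le h1 h)) ht
      · intro h; exact absurd h ht
    · by_cases hib : i = b
      · subst hib
        constructor
        · intro h; exact absurd (le_of_lt (lt_of_lt_of_le h2 h)) ht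
        · intro h; exact absurd (le_of_lt (lt_of_lt_of_le (h1.trans h3) h)) ht
      · rw [hsame i hia hib]
  -- s ≠ s'
  have hne : s ≠ s' := by
    intro h
    have : ((univ : Finset (Fin n)).filter fun i => f i ≤ f a).card
        = ((univ : Finset (Fin n)).filter fun i => f' i ≤ f a).card := by
      rw [← hcs (f a), ← hcs' (f a), h]
    omega
  -- minimal differing index
  have hDne : ((univ : Finset (Fin n)).filter fun i => s i ≠ s' i).Nonempty := by
    by_contra h
    apply hne
    funext i
    by_contra hi
    exact h ⟨i, by simp [hi]⟩
  set D := (univ : Finset (Fin n)).filter fun i => s i ≠ s' i with hD_def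
  set k := D.min' hDne with hk_def
  have hkD : k ∈ D := Finset.min'_mem _ _
  have hkne : s k ≠ s' k := (Finset.mem_filter.mp hkD).2
  have hmin : ∀ j, j < k → s j = s' j := by
    intro j hj
    by_contra hjne
    exact absurd (Finset.min'_le D j (by simp [hD_def, hjne])) (not_le.mpr hj)
  -- show s k < s' k
  have hklt : s k < s' k := by
    rcases lt_or_gt_of_ne hkne with h | h
    · exact h
    · exfalso
      set t := s' k with ht_def
      -- c'(t) ≥ k+1
      have hA : (k : ℕ) + 1 ≤ ((univ : Finset (Fin n)).filter fun i => f' i ≤ t).card := by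
        rw [← hcs' t]
        have hsub : Finset.Iic k ⊆ (univ : Finset (Fin n)).filter fun i => s' i ≤ t := by
          intro j hj
          simp only [Finset.mem_Iic] at hj
          simp only [Finset.mem_filter, Finset.mem_univ, true_and]
          exact hs' hj
        calc (k : ℕ) + 1 = (Finset.Iic k).card := (Fin.card_Iic k).symm
          _ ≤ _ := Finset.card_le_card hsub
      -- c(t) ≤ k
      have hB : ((univ : Finset (Fin n)).filter fun i => f i ≤ t).card ≤ (k : ℕ) := by
        rw [← hcs t]
        have hsub : ((univ : Finset (Fin n)).filter fun i => s i ≤ t) ⊆ Finset.Iio k := by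
          intro j hj
          simp only [Finset.mem_filter, Finset.mem_univ, true_and] at hj
          simp only [Finset.mem_Iio]
          by_contra hjk
          push_neg at hjk
          exact absurd (le_trans (hs hjk) hj) (not_le.mpr h)
        calc ((univ : Finset (Fin n)).filter fun i => s i ≤ t).card
            ≤ (Finset.Iio k).card := Finset.card_le_card hsub
          _ = (k : ℕ) := Fin.card_Iio k
      -- so f a ≤ t
      have hfa : f a ≤ t := by
        by_contra hfa
        have := hF3 t hfa
        have : ((univ : Finset (Fin n)).filter fun i => f' i ≤ t).card
            = ((univ : Finset (Fin n)).filter fun i => f i ≤ t).card := by rw [this]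
        omega
      -- threshold f a : c(f a) ≤ c'(f a)
      have hC : ((univ : Finset (Fin n)).filter fun i => f i ≤ f a).card
          ≤ ((univ : Finset (Fin n)).filter fun i => f' i ≤ f a).card := by
        rw [← hcs (f a), ← hcs' (f a)]
        apply Finset.card_le_card
        intro j hj
        simp only [Finset.mem_filter, Finset.mem_univ, true_and] at hj ⊢
        have hjk : j < k := by
          by_contra hjk
          push_neg at hjk
          exact absurd (le_trans (hs hjk) (le_trans hj hfa)) (not_le.mpr h)
        rw [← hmin j hjk]
        exact hj
      omega
  exact ⟨k, fun j hj => hmin j hj, hklt⟩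

lemma key_contra {n m : ℕ} (w : Fin n → ℝ) (hw : ∀ i, 0 < w i)
    (A : Fin n → Finset (Fin m)) (hWEG : IsWEG w A) (a b : Fin n) (hab : a ≠ b)
    (hda : dvec w A a < 0) (hdb : 0 < dvec w A b)
    (hstep : dvec w A a ≤ -(1/(m:ℝ)) ∨ 1/(m:ℝ) ≤ dvec w A b) : False := by
  classical
  have hW : 0 < ∑ j, w j := Finset.sum_pos (fun j _ => hw j) ⟨b, Finset.mem_univ b⟩
  have hcb : 0 < (A b).card := by
    by_contra h
    push_neg at h
    have h0 : (A b).card = 0 := Nat.le_zero.mp h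
    have : dvec w A b = -(w b / ∑ j, w j) := by
      simp only [dvec, h0]
      simp
    rw [this] at hdb
    have : 0 < w b / ∑ j, w j := div_pos (hw b) hW
    linarith
  obtain ⟨g, hg⟩ := Finset.card_pos.mp hcb
  have hm0 : (0:ℝ) < m := by exact_mod_cast g.pos
  have hm1 : (0:ℝ) < 1/(m:ℝ) := by positivity
  obtain ⟨A', hA', hca, hcb', hAk⟩ := transfer A hWEG.1 a b hab g hg
  have hfa : dvec w A' a = dvec w A a + 1/(m:ℝ) := by
    simp only [dvec, hca]
    push_cast
    rw [add_div]
    ring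
  have hfb : dvec w A' b = dvec w A b - 1/(m:ℝ) := by
    have hc : ((A' b).card : ℝ) = ((A b).card : ℝ) - 1 := by
      have : ((A' b).card : ℝ) + 1 = ((A b).card : ℝ) := by exact_mod_cast hcb'
      linarith
    simp only [dvec, hc]
    rw [sub_div]
    ring
  have hfk : ∀ k, k ≠ a → k ≠ b → dvec w A' k = dvec w A k := by
    intro k h1 h2
    simp only [dvec, hAk k h1 h2]
  have hlt : toLex (dvec w A ∘ Tuple.sort (dvec w A))
      < toLex (dvec w A' ∘ Tuple.sort (dvec w A')) := by
    apply lex_improve (dvec w A) (dvec w A') a b hab hfk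
    · rw [hfa]; linarith
    · rw [hfb]; rcases hstep with h | h <;> linarith
    · rw [hfa]; rcases hstep with h | h <;> linarith
    · rw [hfb]; linarith
  exact absurd (hWEG.2 A' hA') (not_le_of_gt hlt)


/-- With identical items, every WEG allocation satisfies both lower and upper quota. -/
theorem weg_satisfies_quotas (n m : ℕ) (hn : 2 ≤ n)
    (w : Fin n → ℝ) (hw : ∀ i, 0 < w i)
    (A : Fin n → Finset (Fin m)) (hWEG : IsWEG w A) :
    ∀ i : Fin n, ⌊(w i / ∑ j, w j) * (m : ℝ)⌋ ≤ ((A i).card : ℤ) ∧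
      ((A i).card : ℤ) ≤ ⌈(w i / ∑ j, w j) * (m : ℝ)⌉ := by
  classical
  intro i
  have hA := hWEG.1
  have hW : 0 < ∑ j, w j := Finset.sum_pos (fun j _ => hw j) ⟨i, Finset.mem_univ i⟩
  rcases Nat.eq_zero_or_pos m with hm | hm
  · subst hm
    have hcard : (A i).card = 0 :=
      Nat.le_zero.mp ((Finset.card_le_univ (A i)).trans (by simp))
    simp [hcard]
  have hm0 : (0:ℝ) < m := by exact_mod_cast hm
  have hq2 : w i / ∑ j, w j = ((w i / ∑ j, w j) * (m:ℝ)) / m := by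
    rw [eq_div_iff hm0.ne']
  have hsum : ∑ j, (A j).card = m := by
    have hd := Finset.card_biUnion (s := (Finset.univ : Finset (Fin n))) (t := A)
      (fun x _ y _ hxy => hA.1 x y hxy)
    rw [hA.2] at hd
    simpa using hd.symm
  have hcast : ∑ j, (((A j).card : ℝ)) = (m:ℝ) := by
    rw [← Nat.cast_sum]
    exact_mod_cast hsum
  have hdsum : ∑ j, dvec w A j = 0 := by
    simp only [dvec]
    rw [Finset.sum_sub_distrib, ← Finset.sum_div, ← Finset.sum_div, hcast,
      div_self hm0.ne', div_self hW.ne']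
    ring
  set q : ℝ := (w i / ∑ j, w j) * (m:ℝ) with hq_def
  have hdi_eq : dvec w A i = (((A i).card : ℝ) - q) / m := by
    simp only [dvec]
    rw [sub_div, ← hq2]
  constructor
  · -- lower quota
    by_contra h
    push_neg at h
    have h1 : ((A i).card : ℝ) + 1 ≤ (⌊q⌋ : ℝ) := by
      have h2 : ((A i).card : ℤ) + 1 ≤ ⌊q⌋ := h
      exact_mod_cast h2
    have hq1 : ((A i).card : ℝ) ≤ q - 1 := by linarith [Int.floor_le q]
    have hdi : dvec w A i ≤ -(1/(m:ℝ)) := by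
      rw [hdi_eq, ← neg_div]
      gcongr
      linarith
    have hm1' : (0:ℝ) < 1/(m:ℝ) := by positivity
    have hda : dvec w A i < 0 := by linarith
    have hj : ∃ j ∈ Finset.univ.erase i, 0 < dvec w A j := by
      by_contra hc
      push_neg at hc
      have h0 : ∑ j ∈ Finset.univ.erase i, dvec w A j ≤ 0 :=
        Finset.sum_nonpos hc
      rw [Finset.sum_erase_eq_sub (Finset.mem_univ i), hdsum] at h0
      have hm1 : (0:ℝ) < 1/(m:ℝ) := by positivity
      linarith
    obtain ⟨j, hjmem, hdj⟩ := hj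
    have hij : i ≠ j := fun hc => (Finset.mem_erase.mp hjmem).1 hc.symm
    exact key_contra w hw A hWEG i j hij hda hdj (Or.inl hdi)
  · -- upper quota
    by_contra h
    push_neg at h
    have h1 : (⌈q⌉ : ℝ) + 1 ≤ ((A i).card : ℝ) := by
      have h2 : ⌈q⌉ + 1 ≤ ((A i).card : ℤ) := h
      exact_mod_cast h2
    have hq1 : q + 1 ≤ ((A i).card : ℝ) := by linarith [Int.le_ceil q]
    have hdi : 1/(m:ℝ) ≤ dvec w A i := by
      rw [hdi_eq]
      gcongr
      linarith
    have hdb : 0 < dvec w A i := lt_of_lt_of_le (by positivity) hdi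
    have hj : ∃ j ∈ Finset.univ.erase i, dvec w A j < 0 := by
      by_contra hc
      push_neg at hc
      have h0 : (0:ℝ) ≤ ∑ j ∈ Finset.univ.erase i, dvec w A j :=
        Finset.sum_nonneg hc
      rw [Finset.sum_erase_eq_sub (Finset.mem_univ i), hdsum] at h0
      have hm1 : (0:ℝ) < 1/(m:ℝ) := by positivity
      linarith
    obtain ⟨j, hjmem, hdj⟩ := hj
    have hji : j ≠ i := (Finset.mem_erase.mp hjmem).1
    exact key_contra w hw A hWEG j i hji hdj hdb (Or.inr hdi)
end
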